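/- arXiv:2407.17954 — 6 statements merged into one kernel-verified Lean document; each statement's English description precedes it below -/
import Mathlib

section
/- There exist constants 0 < C₁ ≤ C₂ depending only on q, p, K₁, K₂ such that for every integer m ≥ 0 and every u ∈ (0,1): C₁·q^{min(ℓ_u, m)} ≤ Σ_{ℓ=0}^{m} s_ℓ q^{ℓ}/(s_ℓ + u) ≤ C₂·q^{min(ℓ_u, m)}. Equivalently, F(u) := Σ_{ℓ=0}^{m} s_ℓ q^{ℓ}/(s_ℓ + u) satisfies C₁'·min(u^{-1/κ}, q^m) ≤ F(u) ≤ C₂'·min(u^{-1/κ}, q^m) for constants C₁', C₂' depending only on q, p, K₁, K₂. -/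
open Finset

/-- Two-sided estimate `F(u) = Σ_{ℓ=0}^m s_ℓ q^ℓ/(s_ℓ+u) ≍ q^{min(ℓ_u, m)} ≍ min(u^{-1/κ}, q^m)`
for `u ∈ (0,1)`, where `p^{-(ℓ_u+1)} ≤ u < p^{-ℓ_u}` and `κ = log p / log q`,
with constants depending only on `q, p, K₁, K₂`. -/
theorem F_two_sided_estimate
    (q : ℕ) (hq : 2 ≤ q) (p K₁ K₂ : ℝ) (hpq : (q : ℝ) < p)
    (hK₁ : 0 < K₁) (hK₁₂ : K₁ ≤ K₂) :
    ∃ C₁ C₂ C₁' C₂' : ℝ, 0 < C₁ ∧ C₁ ≤ C₂ ∧ 0 < C₁' ∧ C₁' ≤ C₂' ∧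
      ∀ s : ℕ → ℝ,
        (∀ ℓ : ℕ, K₁ * p ^ (-(ℓ : ℝ)) ≤ s ℓ ∧ s ℓ ≤ K₂ * p ^ (-(ℓ : ℝ))) →
        ∀ m : ℕ, ∀ u : ℝ, 0 < u → u < 1 →
        ∀ lu : ℕ, p ^ (-((lu : ℝ) + 1)) ≤ u → u < p ^ (-(lu : ℝ)) →
          (C₁ * (q : ℝ) ^ (min lu m)
              ≤ ∑ ℓ ∈ range (m + 1), s ℓ * (q : ℝ) ^ ℓ / (s ℓ + u) ∧
           ∑ ℓ ∈ range (m + 1), s ℓ * (q : ℝ) ^ ℓ / (s ℓ + u)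
              ≤ C₂ * (q : ℝ) ^ (min lu m)) ∧
          (C₁' * min (u ^ (-1 / (Real.log p / Real.log q))) ((q : ℝ) ^ m)
              ≤ ∑ ℓ ∈ range (m + 1), s ℓ * (q : ℝ) ^ ℓ / (s ℓ + u) ∧
           ∑ ℓ ∈ range (m + 1), s ℓ * (q : ℝ) ^ ℓ / (s ℓ + u)
              ≤ C₂' * min (u ^ (-1 / (Real.log p / Real.log q))) ((q : ℝ) ^ m)) := by
  have hq2 : (2 : ℝ) ≤ q := by exact_mod_cast hq
  have hq1 : (1 : ℝ) < q := by linarith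
  have hq0 : (0 : ℝ) < q := by linarith
  have hp1 : (1 : ℝ) < p := lt_trans hq1 hpq
  have hp0 : (0 : ℝ) < p := by linarith
  have hpq0 : (0 : ℝ) < p - q := by linarith
  have hK₂ : 0 < K₂ := lt_of_lt_of_le hK₁ hK₁₂
  set C₁ : ℝ := K₁ / (K₁ + 1) with hC₁def
  set C₂ : ℝ := 2 + K₂ * q * p / (p - q) with hC₂def
  have hC₁pos : 0 < C₁ := by positivity
  have hC₁lt1 : C₁ < 1 := by
    rw [hC₁def, div_lt_one (by linarith)]; linarith
  have hC₂ge2 : (2 : ℝ) ≤ C₂ := by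
    have h : 0 ≤ K₂ * q * p / (p - q) := by positivity
    rw [hC₂def]; linarith
  have hC₁₂ : C₁ ≤ C₂ := by linarith
  refine ⟨C₁, C₂, C₁ / q, C₂, hC₁pos, hC₁₂, by positivity, ?_, ?_⟩
  · calc C₁ / q ≤ C₁ / 1 := by
          apply div_le_div_of_nonneg_left hC₁pos.le one_pos; linarith
      _ = C₁ := div_one _
      _ ≤ C₂ := hC₁₂
  intro s hs m u hu0 hu1 lu hul huu
  have hs0 : ∀ ℓ, 0 < s ℓ := fun ℓ =>
    lt_of_lt_of_le (by positivity : (0:ℝ) < K₁ * p ^ (-(ℓ:ℝ))) (hs ℓ).1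
  have hden : ∀ ℓ, 0 < s ℓ + u := fun ℓ => by have := hs0 ℓ; linarith
  have ht0 : ∀ ℓ ∈ range (m + 1), 0 ≤ s ℓ * (q : ℝ) ^ ℓ / (s ℓ + u) := by
    intro ℓ _
    have := hs0 ℓ; have := hden ℓ; positivity
  set L : ℕ := min lu m with hLdef
  have hLm : L ≤ m := min_le_right _ _
  have hLlu : L ≤ lu := min_le_left _ _
  -- conversion between rpow and pow for p
  have hrpow : ∀ n : ℕ, p ^ (-(n : ℝ)) = ((p : ℝ) ^ n)⁻¹ := by
    intro n
    rw [Real.rpow_neg hp0.le, Real.rpow_natCast]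
  -- main lower bound
  have hlow : C₁ * (q : ℝ) ^ L ≤ ∑ ℓ ∈ range (m + 1), s ℓ * (q : ℝ) ^ ℓ / (s ℓ + u) := by
    have hmem : L ∈ range (m + 1) := mem_range.mpr (by omega)
    have hsingle := Finset.single_le_sum ht0 hmem
    have hplu : p ^ (-(lu : ℝ)) ≤ p ^ (-(L : ℝ)) :=
      Real.rpow_le_rpow_of_exponent_le hp1.le (by simp; exact_mod_cast hLlu)
    have huL : u ≤ (p ^ L : ℝ)⁻¹ := by
      rw [← hrpow L]; exact le_of_lt (lt_of_lt_of_le huu hplu)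
    have hsL : K₁ * (p ^ L : ℝ)⁻¹ ≤ s L := by
      have := (hs L).1; rwa [hrpow L] at this
    have hKu : K₁ * u ≤ s L := by
      calc K₁ * u ≤ K₁ * (p ^ L : ℝ)⁻¹ := by
            apply mul_le_mul_of_nonneg_left huL hK₁.le
        _ ≤ s L := hsL
    have hterm : C₁ * (q : ℝ) ^ L ≤ s L * (q : ℝ) ^ L / (s L + u) := by
      rw [le_div_iff₀ (hden L), hC₁def, div_mul_eq_mul_div, div_mul_eq_mul_div,
        div_le_iff₀ (by linarith : (0:ℝ) < K₁ + 1)]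
      have hqL : (0 : ℝ) ≤ (q : ℝ) ^ L := by positivity
      nlinarith [mul_le_mul_of_nonneg_left hKu hqL, mul_nonneg hqL (hs0 L).le]
    linarith
  -- termwise upper bound by q^ℓ
  have htup : ∀ ℓ : ℕ, s ℓ * (q : ℝ) ^ ℓ / (s ℓ + u) ≤ (q : ℝ) ^ ℓ := by
    intro ℓ
    rw [div_le_iff₀ (hden ℓ)]
    have : (0:ℝ) ≤ (q:ℝ)^ℓ := by positivity
    nlinarith [hs0 ℓ]
  -- geometric sum bound
  have hgeom : ∀ n : ℕ, ∑ ℓ ∈ range (n + 1), (q : ℝ) ^ ℓ ≤ 2 * (q : ℝ) ^ n := by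
    intro n
    rw [geom_sum_eq (by linarith : (q:ℝ) ≠ 1), div_le_iff₀ (by linarith : (0:ℝ) < (q:ℝ) - 1),
      pow_succ]
    have hqn : (0:ℝ) < (q:ℝ) ^ n := by positivity
    nlinarith
  -- main upper bound
  have hup : ∑ ℓ ∈ range (m + 1), s ℓ * (q : ℝ) ^ ℓ / (s ℓ + u) ≤ C₂ * (q : ℝ) ^ L := by
    rcases le_or_gt m lu with hmlu | hlum
    · have hLm' : L = m := min_eq_right hmlu
      calc ∑ ℓ ∈ range (m + 1), s ℓ * (q : ℝ) ^ ℓ / (s ℓ + u)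
          ≤ ∑ ℓ ∈ range (m + 1), (q : ℝ) ^ ℓ :=
            Finset.sum_le_sum fun ℓ _ => htup ℓ
        _ ≤ 2 * (q : ℝ) ^ m := hgeom m
        _ ≤ C₂ * (q : ℝ) ^ L := by
            rw [hLm']
            apply mul_le_mul_of_nonneg_right hC₂ge2 (by positivity)
    · have hLlu' : L = lu := min_eq_left hlum.le
      have hsplit : ∑ ℓ ∈ range (lu + 1), s ℓ * (q : ℝ) ^ ℓ / (s ℓ + u)
          + ∑ ℓ ∈ Ico (lu + 1) (m + 1), s ℓ * (q : ℝ) ^ ℓ / (s ℓ + u)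
          = ∑ ℓ ∈ range (m + 1), s ℓ * (q : ℝ) ^ ℓ / (s ℓ + u) :=
        Finset.sum_range_add_sum_Ico _ (by omega)
      have hA : ∑ ℓ ∈ range (lu + 1), s ℓ * (q : ℝ) ^ ℓ / (s ℓ + u) ≤ 2 * (q : ℝ) ^ lu :=
        le_trans (Finset.sum_le_sum fun ℓ _ => htup ℓ) (hgeom lu)
      -- part B
      have hu' : (p ^ (lu + 1) : ℝ)⁻¹ ≤ u := by
        have := hul
        rw [show (-((lu:ℝ)+1)) = -(((lu+1 : ℕ)):ℝ) by push_cast; ring, hrpow (lu+1)] at this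
        exact this
      have hBterm : ∀ ℓ : ℕ, s ℓ * (q : ℝ) ^ ℓ / (s ℓ + u)
          ≤ K₂ * p ^ (lu + 1) * ((q : ℝ) / p) ^ ℓ := by
        intro ℓ
        have h1 : s ℓ * (q : ℝ) ^ ℓ / (s ℓ + u) ≤ s ℓ * (q : ℝ) ^ ℓ / u := by
          apply div_le_div_of_nonneg_left _ hu0 (by linarith [hs0 ℓ])
          have := hs0 ℓ; positivity
        have hsup : s ℓ ≤ K₂ * ((p : ℝ) ^ ℓ)⁻¹ := by
          have := (hs ℓ).2; rwa [hrpow ℓ] at this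
        have h2 : s ℓ * (q : ℝ) ^ ℓ / u ≤ K₂ * ((p : ℝ) ^ ℓ)⁻¹ * (q : ℝ) ^ ℓ * p ^ (lu + 1) := by
          rw [div_le_iff₀ hu0]
          calc s ℓ * (q : ℝ) ^ ℓ ≤ K₂ * ((p : ℝ) ^ ℓ)⁻¹ * (q : ℝ) ^ ℓ := by
                apply mul_le_mul_of_nonneg_right hsup (by positivity)
            _ = K₂ * ((p : ℝ) ^ ℓ)⁻¹ * (q : ℝ) ^ ℓ * p ^ (lu + 1) * (p ^ (lu + 1) : ℝ)⁻¹ := by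
                field_simp
            _ ≤ K₂ * ((p : ℝ) ^ ℓ)⁻¹ * (q : ℝ) ^ ℓ * p ^ (lu + 1) * u := by
                apply mul_le_mul_of_nonneg_left hu' (by positivity)
        calc s ℓ * (q : ℝ) ^ ℓ / (s ℓ + u) ≤ K₂ * ((p : ℝ) ^ ℓ)⁻¹ * (q : ℝ) ^ ℓ * p ^ (lu + 1) :=
              le_trans h1 h2
          _ = K₂ * p ^ (lu + 1) * ((q : ℝ) / p) ^ ℓ := by
              rw [div_pow]; field_simp
      have hr1 : (q : ℝ) / p < 1 := (div_lt_one hp0).mpr hpq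
      have hr0 : (0 : ℝ) < (q : ℝ) / p := by positivity
      have hB : ∑ ℓ ∈ Ico (lu + 1) (m + 1), s ℓ * (q : ℝ) ^ ℓ / (s ℓ + u)
          ≤ K₂ * q * p / (p - q) * (q : ℝ) ^ lu := by
        calc ∑ ℓ ∈ Ico (lu + 1) (m + 1), s ℓ * (q : ℝ) ^ ℓ / (s ℓ + u)
            ≤ ∑ ℓ ∈ Ico (lu + 1) (m + 1), K₂ * p ^ (lu + 1) * ((q : ℝ) / p) ^ ℓ :=
              Finset.sum_le_sum fun ℓ _ => hBterm ℓ
          _ = K₂ * p ^ (lu + 1) * ∑ ℓ ∈ Ico (lu + 1) (m + 1), ((q : ℝ) / p) ^ ℓ := by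
              rw [Finset.mul_sum]
          _ ≤ K₂ * p ^ (lu + 1) * (((q : ℝ) / p) ^ (lu + 1) / (1 - (q : ℝ) / p)) := by
              apply mul_le_mul_of_nonneg_left _ (by positivity)
              rw [geom_sum_Ico' (by linarith : (q:ℝ)/p ≠ 1) (by omega)]
              apply div_le_div_of_nonneg_right _ (by linarith)
              have : (0:ℝ) ≤ ((q:ℝ)/p) ^ (m+1) := by positivity
              linarith
          _ = K₂ * q * p / (p - q) * (q : ℝ) ^ lu := by
              rw [div_pow]
              have hppow : (0:ℝ) < (p:ℝ) ^ (lu+1) := by positivity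
              field_simp
              ring
      calc ∑ ℓ ∈ range (m + 1), s ℓ * (q : ℝ) ^ ℓ / (s ℓ + u)
          = _ + _ := hsplit.symm
        _ ≤ 2 * (q : ℝ) ^ lu + K₂ * q * p / (p - q) * (q : ℝ) ^ lu := add_le_add hA hB
        _ = C₂ * (q : ℝ) ^ L := by rw [hLlu', hC₂def]; ring
  -- rpow identities
  have hlogp : 0 < Real.log p := Real.log_pos hp1
  have hlogq : 0 < Real.log q := Real.log_pos hq1
  have he : -1 / (Real.log p / Real.log q) = -(Real.log q / Real.log p) := by
    rw [neg_div, one_div_div]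
  have hcalc : ∀ n : ℕ, (p ^ (-(n : ℝ))) ^ (-(Real.log q / Real.log p)) = (q : ℝ) ^ n := by
    intro n
    rw [← Real.rpow_natCast (q : ℝ) n, ← Real.rpow_mul hp0.le,
      Real.rpow_def_of_pos hp0, Real.rpow_def_of_pos hq0]
    congr 1
    field_simp
  set e : ℝ := -1 / (Real.log p / Real.log q) with hedef
  have hee : e = -(Real.log q / Real.log p) := he
  have heneg : e ≤ 0 := by
    rw [hee]
    have : 0 ≤ Real.log q / Real.log p := by positivity
    linarith
  have hue_up : u ^ e ≤ (q : ℝ) ^ (lu + 1) := by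
    have h1 : u ^ e ≤ (p ^ (-((lu : ℝ) + 1))) ^ e :=
      Real.rpow_le_rpow_of_nonpos (by positivity) hul heneg
    have h2 : (p ^ (-((lu : ℝ) + 1))) ^ e = (q : ℝ) ^ (lu + 1) := by
      rw [hee, show (-((lu:ℝ)+1)) = -(((lu+1 : ℕ)):ℝ) by push_cast; ring]
      exact hcalc (lu + 1)
    linarith [h1, le_of_eq h2]
  have hue_lo : (q : ℝ) ^ lu ≤ u ^ e := by
    have h1 : (p ^ (-(lu : ℝ))) ^ e ≤ u ^ e :=
      Real.rpow_le_rpow_of_nonpos hu0 huu.le heneg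
    have h2 : (p ^ (-(lu : ℝ))) ^ e = (q : ℝ) ^ lu := by rw [hee]; exact hcalc lu
    linarith [h1, le_of_eq h2.symm]
  set M : ℝ := min (u ^ e) ((q : ℝ) ^ m) with hMdef
  have hM_lo : (q : ℝ) ^ L ≤ M := by
    apply le_min
    · exact le_trans (pow_le_pow_right₀ hq1.le hLlu) hue_lo
    · exact pow_le_pow_right₀ hq1.le hLm
  have hM_up : M ≤ (q : ℝ) * (q : ℝ) ^ L := by
    rcases le_total lu m with h | h
    · have : L = lu := min_eq_left h
      rw [this]
      calc M ≤ u ^ e := min_le_left _ _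
        _ ≤ (q : ℝ) ^ (lu + 1) := hue_up
        _ = (q : ℝ) * (q : ℝ) ^ lu := by rw [pow_succ]; ring
    · have : L = m := min_eq_right h
      rw [this]
      calc M ≤ (q : ℝ) ^ m := min_le_right _ _
        _ ≤ (q : ℝ) * (q : ℝ) ^ m := le_mul_of_one_le_left (by positivity) hq1.le
  refine ⟨⟨hlow, hup⟩, ?_, ?_⟩
  · calc C₁ / q * M ≤ C₁ / q * ((q : ℝ) * (q : ℝ) ^ L) := by
          apply mul_le_mul_of_nonneg_left hM_up (by positivity)
      _ = C₁ * (q : ℝ) ^ L := by field_simp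
      _ ≤ _ := hlow
  · calc ∑ ℓ ∈ range (m + 1), s ℓ * (q : ℝ) ^ ℓ / (s ℓ + u) ≤ C₂ * (q : ℝ) ^ L := hup
      _ ≤ C₂ * M := by
          apply mul_le_mul_of_nonneg_left hM_lo (by linarith)
end

section
/- Let λ* = λ*(λ, n, m) be the unique positive solution of n − λ/λ* = Σ_{ℓ=0}^{m} s_ℓ q^{ℓ}/(s_ℓ + λ*). There exist constants c₀ ∈ (0,1), c₀' ≥ 1 and 0 < C₁ ≤ C₂, 0 < C₃ ≤ C₄ depending only on q, p, K₁, K₂ such that for all integers m ≥ 0, all integers n ≥ 1, and all λ > 0: (i) if n ≤ c₀·q^m then C₁·max(λ/n, n^{-κ}) ≤ λ* ≤ C₂·max(λ/n, n^{-κ}); (ii) if n ≥ c₀'·q^m then C₃·λ/n ≤ λ* ≤ C₄·λ/n. -/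
open Finset
set_option maxHeartbeats 1000000

lemma geom_two_le {x : ℝ} (hx : 2 ≤ x) : ∀ m : ℕ, ∑ ℓ ∈ range (m+1), x ^ ℓ ≤ 2 * x ^ m := by
  intro m
  induction m with
  | zero => norm_num
  | succ k ih =>
      rw [Finset.sum_range_succ]
      have h1 : (2:ℝ) * x ^ k ≤ x ^ (k+1) := by
        rw [pow_succ]
        nlinarith [pow_nonneg (by linarith : (0:ℝ) ≤ x) k]
      linarith

lemma geom_lt_one_le {r : ℝ} (h0 : 0 ≤ r) (h1 : r < 1) (n : ℕ) :
    ∑ ℓ ∈ range n, r ^ ℓ ≤ (1 - r)⁻¹ := by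
  rw [geom_sum_eq (by linarith : r ≠ 1) n]
  have hr : (0:ℝ) < 1 - r := by linarith
  have hp := pow_nonneg h0 n
  rw [div_le_iff_of_neg (by linarith : r - 1 < 0)]
  have e : (1 - r)⁻¹ * (r - 1) = -1 := by field_simp; ring
  rw [e]; linarith

/-- Order of the effective regularization `λ*`, the unique positive solution of
`n − λ/λ* = Σ_{ℓ=0}^m s_ℓ q^ℓ/(s_ℓ+λ*)`: if `n ≤ c₀ q^m` then `λ* ≍ max(λ/n, n^{-κ})`,
and if `n ≥ c₀' q^m` then `λ* ≍ λ/n`, with constants depending only on `q, p, K₁, K₂`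
and `κ = log p / log q`. -/
theorem effective_regularization_order
    (q : ℕ) (hq : 2 ≤ q) (p K₁ K₂ : ℝ) (hpq : (q : ℝ) < p)
    (hK₁ : 0 < K₁) (hK₁₂ : K₁ ≤ K₂) :
    ∃ c₀ c₀' C₁ C₂ C₃ C₄ : ℝ,
      0 < c₀ ∧ c₀ < 1 ∧ 1 ≤ c₀' ∧ 0 < C₁ ∧ C₁ ≤ C₂ ∧ 0 < C₃ ∧ C₃ ≤ C₄ ∧
      ∀ s : ℕ → ℝ,
        (∀ ℓ : ℕ, K₁ * p ^ (-(ℓ : ℝ)) ≤ s ℓ ∧ s ℓ ≤ K₂ * p ^ (-(ℓ : ℝ))) →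
        ∀ m n : ℕ, 1 ≤ n → ∀ lam : ℝ, 0 < lam →
        ∀ lamstar : ℝ, 0 < lamstar →
          ((n : ℝ) - lam / lamstar
              = ∑ ℓ ∈ range (m + 1), s ℓ * (q : ℝ) ^ ℓ / (s ℓ + lamstar)) →
          (((n : ℝ) ≤ c₀ * (q : ℝ) ^ m →
            C₁ * max (lam / n) ((n : ℝ) ^ (-(Real.log p / Real.log q))) ≤ lamstar ∧
            lamstar ≤ C₂ * max (lam / n) ((n : ℝ) ^ (-(Real.log p / Real.log q)))) ∧
          (c₀' * (q : ℝ) ^ m ≤ (n : ℝ) →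
            C₃ * (lam / n) ≤ lamstar ∧ lamstar ≤ C₄ * (lam / n))) := by
  have hq2 : (2:ℝ) ≤ q := by exact_mod_cast hq
  have hq0 : (0:ℝ) < q := by linarith
  have hq1 : (1:ℝ) < q := by linarith
  have hp1 : (1:ℝ) < p := lt_trans hq1 hpq
  have hp0 : (0:ℝ) < p := by linarith
  have hK₂ : 0 < K₂ := lt_of_lt_of_le hK₁ hK₁₂
  set κ := Real.log p / Real.log q with hκdef
  have hκ0 : 0 < κ := div_pos (Real.log_pos hp1) (Real.log_pos hq1)
  have hqκ : (q:ℝ) ^ κ = p := by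
    have : κ = Real.logb q p := rfl
    rw [this]; exact Real.rpow_logb hq0 (ne_of_gt hq1) hp0
  have hpowκ : ∀ L : ℕ, ((q:ℝ)^L) ^ κ = (p:ℝ)^L := by
    intro L
    rw [← Real.rpow_natCast (q:ℝ) L, ← Real.rpow_mul hq0.le, mul_comm,
      Real.rpow_mul hq0.le, hqκ, Real.rpow_natCast]
  have hpqd : (0:ℝ) < p - q := by linarith
  set A := K₂ * p / (p - q) with hAdef
  have hA0 : 0 < A := div_pos (by positivity) hpqd
  set r := (q:ℝ)/p with hrdef
  have hr0 : (0:ℝ) ≤ r := by positivity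
  have hr1 : r < 1 := (div_lt_one hp0).mpr hpq
  have hArel : K₂ * (1 - r)⁻¹ = A := by
    rw [hAdef, hrdef]
    rw [show (1:ℝ) - (q:ℝ)/p = (p - q)/p by field_simp]
    field_simp
  set twoκ := (2:ℝ) ^ κ with htwoκ
  have htwoκ0 : 0 < twoκ := Real.rpow_pos_of_pos (by norm_num) κ
  set Cb := (6:ℝ) ^ κ with hCbdef
  have hCb0 : 0 < Cb := Real.rpow_pos_of_pos (by norm_num) κ
  set C₁ := min 1 (min K₁ (K₁ / (p * twoκ))) with hC₁def
  set C₂ := 2 + A + Cb * p * A with hC₂def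
  have hC₁0 : 0 < C₁ := by
    apply lt_min one_pos
    exact lt_min hK₁ (by positivity)
  have hCbpA : 0 < Cb * p * A := by positivity
  have hC₂2 : 2 ≤ C₂ := by rw [hC₂def]; linarith
  have hC₁C₂ : C₁ ≤ C₂ := le_trans (min_le_left _ _) (by linarith)
  clear_value κ A r twoκ Cb C₁ C₂
  refine ⟨1/4, 4, C₁, C₂, 1, 2, by norm_num, by norm_num, by norm_num, hC₁0, hC₁C₂,
    one_pos, by norm_num, ?_⟩
  intro s hs m n hn lam hlam ls hls heq
  have hn0 : (0:ℝ) < n := by exact_mod_cast hn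
  have hn1 : (1:ℝ) ≤ n := by exact_mod_cast hn
  have hs0 : ∀ ℓ, 0 < s ℓ :=
    fun ℓ => lt_of_lt_of_le (mul_pos hK₁ (Real.rpow_pos_of_pos hp0 _)) (hs ℓ).1
  have hpinv : ∀ ℓ : ℕ, (p:ℝ) ^ (-(ℓ:ℝ)) = ((p:ℝ)^ℓ)⁻¹ := fun ℓ => by
    rw [Real.rpow_neg hp0.le, Real.rpow_natCast]
  have hsl : ∀ ℓ, K₁ * ((p:ℝ)^ℓ)⁻¹ ≤ s ℓ ∧ s ℓ ≤ K₂ * ((p:ℝ)^ℓ)⁻¹ := fun ℓ => by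
    rw [← hpinv]; exact hs ℓ
  set N := ∑ ℓ ∈ range (m+1), s ℓ * (q:ℝ)^ℓ / (s ℓ + ls) with hNdef
  have heq' : (n : ℝ) - lam / ls = N := heq
  clear_value N
  have hden : ∀ ℓ, 0 < s ℓ + ls := fun ℓ => by have := hs0 ℓ; linarith
  have ht0 : ∀ ℓ, 0 ≤ s ℓ * (q:ℝ)^ℓ / (s ℓ + ls) := fun ℓ => by
    apply div_nonneg _ (hden ℓ).le
    exact mul_nonneg (hs0 ℓ).le (by positivity)
  have hN0 : 0 ≤ N := by
    rw [hNdef]; exact Finset.sum_nonneg fun ℓ _ => ht0 ℓ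
  have hNn : N < n := by
    have : 0 < lam / ls := div_pos hlam hls
    linarith [heq']
  have hlsn : lam / n ≤ ls := by
    have h1 : lam / ls ≤ n := by linarith [heq']
    rw [div_le_iff₀ hls] at h1
    rw [div_le_iff₀ hn0]
    linarith
  have htq : ∀ ℓ, s ℓ * (q:ℝ)^ℓ / (s ℓ + ls) ≤ (q:ℝ)^ℓ := by
    intro ℓ
    rw [div_le_iff₀ (hden ℓ)]
    have hql : (0:ℝ) ≤ (q:ℝ)^ℓ := by positivity
    have h := mul_nonneg hql hls.le
    linarith
  have htr : ∀ ℓ, s ℓ * (q:ℝ)^ℓ / (s ℓ + ls) ≤ K₂ * r^ℓ / ls := by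
    intro ℓ
    have h1 : s ℓ * (q:ℝ)^ℓ / (s ℓ + ls) ≤ s ℓ * (q:ℝ)^ℓ / ls := by
      apply div_le_div_of_nonneg_left (mul_nonneg (hs0 ℓ).le (by positivity)) hls
      have := hs0 ℓ; linarith
    have h2 : s ℓ * (q:ℝ)^ℓ ≤ K₂ * r^ℓ := by
      have h3 : s ℓ * (q:ℝ)^ℓ ≤ (K₂ * ((p:ℝ)^ℓ)⁻¹) * (q:ℝ)^ℓ := by
        apply mul_le_mul_of_nonneg_right (hsl ℓ).2 (by positivity)
      have h4 : (K₂ * ((p:ℝ)^ℓ)⁻¹) * (q:ℝ)^ℓ = K₂ * r^ℓ := by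
        rw [hrdef, div_pow]
        field_simp
      linarith
    exact le_trans h1 (by gcongr)
  have hthalf : ∀ ℓ, ls ≤ s ℓ → (q:ℝ)^ℓ / 2 ≤ s ℓ * (q:ℝ)^ℓ / (s ℓ + ls) := by
    intro ℓ h
    rw [div_le_div_iff₀ two_pos (hden ℓ)]
    have hql : (0:ℝ) ≤ (q:ℝ)^ℓ := by positivity
    have h2 := mul_le_mul_of_nonneg_left h hql
    linarith
  have hsingle : ∀ ℓ, ℓ ≤ m → s ℓ * (q:ℝ)^ℓ / (s ℓ + ls) ≤ N := by
    intro ℓ hℓ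
    rw [hNdef]
    exact Finset.single_le_sum (fun i _ => ht0 i) (Finset.mem_range.mpr (by omega))
  have hNgeom : N ≤ 2 * (q:ℝ)^m := by
    rw [hNdef]
    exact le_trans (Finset.sum_le_sum fun ℓ _ => htq ℓ) (geom_two_le hq2 m)
  have hNA : N ≤ A / ls := by
    calc N ≤ ∑ ℓ ∈ range (m+1), K₂ * r^ℓ / ls := by
          rw [hNdef]; exact Finset.sum_le_sum fun ℓ _ => htr ℓ
      _ = (K₂/ls) * ∑ ℓ ∈ range (m+1), r^ℓ := by
          rw [Finset.mul_sum]; exact Finset.sum_congr rfl fun ℓ _ => by ring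
      _ ≤ (K₂/ls) * (1-r)⁻¹ :=
          mul_le_mul_of_nonneg_left (geom_lt_one_le hr0 hr1 _) (by positivity)
      _ = A / ls := by rw [← hArel]; ring
  have hnκneg : (n:ℝ) ^ (-κ) = ((n:ℝ)^κ)⁻¹ := Real.rpow_neg hn0.le κ
  have hnκpos : 0 < (n:ℝ)^κ := Real.rpow_pos_of_pos hn0 κ
  have hupper : ls ≤ C₂ * max (lam / n) ((n:ℝ) ^ (-κ)) := by
    set M := max (lam / (n:ℝ)) ((n:ℝ) ^ (-κ)) with hMdef
    have hM0 : 0 < M := lt_of_lt_of_le (div_pos hlam hn0) (le_max_left _ _)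
    clear_value M
    have hMl : lam / n ≤ M := by rw [hMdef]; exact le_max_left _ _
    have hMn : (n:ℝ) ^ (-κ) ≤ M := by rw [hMdef]; exact le_max_right _ _
    by_cases hAls : A < ls
    · by_cases hn2 : 2 ≤ n
      · have hn2' : (2:ℝ) ≤ n := by exact_mod_cast hn2
        have hN1 : N < 1 := lt_of_le_of_lt hNA ((div_lt_one hls).mpr hAls)
        have h1 : (n:ℝ)/2 ≤ lam/ls := by linarith [heq']
        rw [le_div_iff₀ hls] at h1
        have h2 : ls ≤ 2 * (lam/n) := by
          rw [show (2:ℝ)*(lam/n) = 2*lam/n by ring, le_div_iff₀ hn0]; linarith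
        calc ls ≤ 2*(lam/(n:ℝ)) := h2
          _ ≤ 2*M := by linarith
          _ ≤ C₂*M := mul_le_mul_of_nonneg_right hC₂2 hM0.le
      · have hn1'' : n = 1 := by omega
        subst hn1''
        push_cast at heq' hMl hMn ⊢
        have hNls : N * ls ≤ A := by
          have h := hNA
          rw [le_div_iff₀ hls] at h; exact h
        have hls_eq : ls - lam = N * ls := by
          have h : ((1:ℝ) - lam/ls) * ls = N * ls := by rw [heq']
          have h2 : ((1:ℝ) - lam/ls) * ls = ls - lam := by field_simp
          linarith
        have hM1 : 1 ≤ M := by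
          rw [Real.one_rpow] at hMn; exact hMn
        have hMlam : lam ≤ M := by rw [div_one] at hMl; exact hMl
        have hup : ls ≤ lam + A := by linarith
        have hC2A : 1 + A ≤ C₂ := by rw [hC₂def]; linarith
        calc ls ≤ lam + A := hup
          _ ≤ M + A*M := by
              have h := mul_le_mul_of_nonneg_left hM1 hA0.le
              linarith
          _ = (1+A)*M := by ring
          _ ≤ C₂*M := mul_le_mul_of_nonneg_right hC2A hM0.le
    · push_neg at hAls
      by_contra hcon
      push_neg at hcon
      have hCM : C₂ * M < ls := hcon
      set L := Nat.ceil (Real.logb p (A/ls)) with hLdef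
      clear_value L
      have hx1 : 1 ≤ A/ls := (one_le_div hls).mpr hAls
      have hxpos : 0 < A/ls := div_pos hA0 hls
      have hlb0 : 0 ≤ Real.logb p (A/ls) := Real.logb_nonneg hp1 hx1
      have hge : A/ls ≤ (p:ℝ)^L := by
        have h0 : Real.logb p (A/ls) ≤ (L:ℝ) := by
          rw [hLdef]; exact Nat.le_ceil _
        have h := Real.rpow_le_rpow_of_exponent_le hp1.le h0
        rwa [Real.rpow_logb hp0 hp1.ne' hxpos, Real.rpow_natCast] at h
      have hle : (p:ℝ)^L ≤ p * (A/ls) := by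
        have h1 : (L:ℝ) ≤ Real.logb p (A/ls) + 1 := by
          rw [hLdef]; exact (Nat.ceil_lt_add_one hlb0).le
        have h2 := Real.rpow_le_rpow_of_exponent_le hp1.le h1
        rw [Real.rpow_natCast] at h2
        rwa [Real.rpow_add hp0, Real.rpow_logb hp0 hp1.ne' hxpos, Real.rpow_one, mul_comm] at h2
      have hqL0 : (0:ℝ) < (q:ℝ)^L := pow_pos hq0 L
      have hN3 : N ≤ 3 * (q:ℝ)^L := by
        by_cases hLm : m ≤ L
        · have h2 : (q:ℝ)^m ≤ (q:ℝ)^L := pow_le_pow_right₀ hq1.le hLm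
          linarith
        · push_neg at hLm
          have hsplit : N = (∑ ℓ ∈ range (L+1), s ℓ * (q:ℝ)^ℓ / (s ℓ + ls))
              + ∑ ℓ ∈ Finset.Ico (L+1) (m+1), s ℓ * (q:ℝ)^ℓ / (s ℓ + ls) := by
            rw [hNdef, Finset.range_eq_Ico, Finset.range_eq_Ico]
            exact (Finset.sum_Ico_consecutive (fun ℓ => s ℓ * (q:ℝ)^ℓ / (s ℓ + ls)) (m := 0) (n := L+1) (k := m+1) (by omega) (by omega)).symm
          have hhead : (∑ ℓ ∈ range (L+1), s ℓ * (q:ℝ)^ℓ / (s ℓ + ls)) ≤ 2*(q:ℝ)^L :=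
            le_trans (Finset.sum_le_sum fun ℓ _ => htq ℓ) (geom_two_le hq2 L)
          have htail : (∑ ℓ ∈ Finset.Ico (L+1) (m+1), s ℓ * (q:ℝ)^ℓ / (s ℓ + ls)) ≤ (q:ℝ)^L := by
            have h1 : (∑ ℓ ∈ Finset.Ico (L+1) (m+1), s ℓ * (q:ℝ)^ℓ / (s ℓ + ls))
                ≤ ∑ ℓ ∈ Finset.Ico (L+1) (m+1), K₂ * r^ℓ / ls :=
              Finset.sum_le_sum fun ℓ _ => htr ℓ
            have h2 : (∑ ℓ ∈ Finset.Ico (L+1) (m+1), K₂ * r^ℓ/ls)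
                = (K₂/ls) * ∑ ℓ ∈ Finset.Ico (L+1) (m+1), r^ℓ := by
              rw [Finset.mul_sum]; exact Finset.sum_congr rfl fun ℓ _ => by ring
            have h3 : (∑ ℓ ∈ Finset.Ico (L+1) (m+1), r^ℓ) ≤ r^(L+1) * (1-r)⁻¹ := by
              rw [Finset.sum_Ico_eq_sum_range]
              calc (∑ i ∈ range (m+1-(L+1)), r^(L+1+i))
                  = r^(L+1) * ∑ i ∈ range (m+1-(L+1)), r^i := by
                    rw [Finset.mul_sum]; exact Finset.sum_congr rfl fun i _ => pow_add r (L+1) i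
                _ ≤ r^(L+1)*(1-r)⁻¹ :=
                    mul_le_mul_of_nonneg_left (geom_lt_one_le hr0 hr1 _) (pow_nonneg hr0 _)
            have h4 : (K₂/ls) * (r^(L+1) * (1-r)⁻¹) = (A/ls) * r^(L+1) := by
              rw [← hArel]; ring
            have h5 : (A/ls) * r^(L+1) ≤ (A/ls) * r^L :=
              mul_le_mul_of_nonneg_left (pow_le_pow_of_le_one hr0 hr1.le (by omega)) hxpos.le
            have h6 : (A/ls) * r^L ≤ (q:ℝ)^L := by
              have hrq : r^L = (q:ℝ)^L * ((p:ℝ)^L)⁻¹ := by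
                rw [hrdef, div_pow, div_eq_mul_inv]
              rw [hrq]
              have hpL0 : (0:ℝ) < (p:ℝ)^L := pow_pos hp0 L
              rw [show (A/ls)*((q:ℝ)^L*((p:ℝ)^L)⁻¹) = (q:ℝ)^L * ((A/ls) * ((p:ℝ)^L)⁻¹) by ring]
              have h7 : (A/ls) * ((p:ℝ)^L)⁻¹ ≤ 1 := by
                rw [← div_eq_mul_inv, div_le_one hpL0]; exact hge
              have h8 := mul_le_mul_of_nonneg_left h7 hqL0.le
              linarith
            calc (∑ ℓ ∈ Finset.Ico (L+1) (m+1), s ℓ * (q:ℝ)^ℓ / (s ℓ + ls))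
                ≤ (K₂/ls) * ∑ ℓ ∈ Finset.Ico (L+1) (m+1), r^ℓ := by rw [← h2]; exact h1
              _ ≤ (K₂/ls) * (r^(L+1) * (1-r)⁻¹) := by
                  have := mul_le_mul_of_nonneg_left h3 (le_of_lt (div_pos hK₂ hls))
                  linarith [this]
              _ = (A/ls) * r^(L+1) := h4
              _ ≤ (A/ls) * r^L := h5
              _ ≤ (q:ℝ)^L := h6
          linarith
      have hls2 : C₂ * ((n:ℝ)^κ)⁻¹ < ls := by
        have h := hMn; rw [hnκneg] at h
        have h2 := mul_le_mul_of_nonneg_left h (by linarith : (0:ℝ) ≤ C₂)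
        linarith
      have hpACb : p * A * Cb < C₂ := by
        rw [hC₂def]
        have : p * A * Cb = Cb * p * A := by ring
        linarith
      have hkey : (p:ℝ)^L < (n:ℝ)^κ / Cb := by
        have h1 : p * (A/ls) < p * A / (C₂ * ((n:ℝ)^κ)⁻¹) := by
          rw [show p * (A/ls) = p*A/ls by ring]
          exact div_lt_div_of_pos_left (by positivity) (by positivity) hls2
        have h2 : p * A / (C₂ * ((n:ℝ)^κ)⁻¹) = (p*A/C₂) * (n:ℝ)^κ := by
          field_simp
        have h3 : (p*A/C₂) * (n:ℝ)^κ < (n:ℝ)^κ/Cb := by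
          rw [div_mul_eq_mul_div, div_lt_div_iff₀ (by positivity) hCb0]
          have h := mul_lt_mul_of_pos_right hpACb hnκpos
          linarith [h]
        calc (p:ℝ)^L ≤ p*(A/ls) := hle
          _ < p * A / (C₂ * ((n:ℝ)^κ)⁻¹) := h1
          _ = (p*A/C₂) * (n:ℝ)^κ := h2
          _ < (n:ℝ)^κ/Cb := h3
      have hq6 : (q:ℝ)^L < (n:ℝ)/6 := by
        by_contra h6; push_neg at h6
        have h7 : ((n:ℝ)/6)^κ ≤ ((q:ℝ)^L)^κ := Real.rpow_le_rpow (by positivity) h6 hκ0.le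
        rw [hpowκ L] at h7
        have h8 : ((n:ℝ)/6)^κ = (n:ℝ)^κ / Cb := by
          rw [Real.div_rpow hn0.le (by norm_num : (0:ℝ) ≤ 6), hCbdef]
        rw [h8] at h7
        linarith
      have hlamls : lam/ls < (n:ℝ)/2 := by
        have h1 : C₂ * (lam/n) ≤ C₂ * M :=
          mul_le_mul_of_nonneg_left hMl (by linarith : (0:ℝ) ≤ C₂)
        have h2 : C₂ * (lam/n) < ls := lt_of_le_of_lt h1 hCM
        have h3 : lam/ls < lam/(C₂*(lam/(n:ℝ))) :=
          div_lt_div_of_pos_left hlam (by positivity) h2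
        have h4 : lam/(C₂*(lam/(n:ℝ))) = (n:ℝ)/C₂ := by
          field_simp
        have h5 : (n:ℝ)/C₂ ≤ (n:ℝ)/2 := by
          apply div_le_div_of_nonneg_left hn0.le two_pos hC₂2
        rw [h4] at h3
        linarith
      linarith
  refine ⟨fun hcond => ⟨?_, hupper⟩, fun hcond => ⟨?_, ?_⟩⟩
  · -- lower bound in regime (i)
    have hqm0 : (0:ℝ) < (q:ℝ)^m := pow_pos hq0 m
    have claim1 : K₁ * ((p:ℝ)^m)⁻¹ < ls := by
      by_contra hcc; push_neg at hcc
      have h1 : ls ≤ s m := le_trans hcc (hsl m).1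
      have h2 := hthalf m h1
      have h3 := hsingle m le_rfl
      linarith
    have hml : C₁ * (lam/(n:ℝ)) ≤ ls := by
      have h1 : C₁ * (lam/(n:ℝ)) ≤ 1 * (lam/(n:ℝ)) :=
        mul_le_mul_of_nonneg_right (by rw [hC₁def]; exact min_le_left _ _) (div_pos hlam hn0).le
      linarith
    have hnκ : C₁ * (n:ℝ)^(-κ) ≤ ls := by
      have hnκ1 : (n:ℝ)^(-κ) ≤ 1 :=
        Real.rpow_le_one_of_one_le_of_nonpos hn1 (by linarith)
      have hnκnn : (0:ℝ) ≤ (n:ℝ)^(-κ) := (Real.rpow_pos_of_pos hn0 _).le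
      by_cases hK : K₁ < ls
      · have h1 : C₁ * (n:ℝ)^(-κ) ≤ K₁ * 1 :=
          mul_le_mul (by rw [hC₁def]; exact le_trans (min_le_right _ _) (min_le_left _ _)) hnκ1 hnκnn hK₁.le
        linarith
      · push_neg at hK
        set L := Nat.floor (Real.logb p (K₁/ls)) with hLdef
        clear_value L
        have hx1 : 1 ≤ K₁ / ls := (one_le_div hls).mpr hK
        have hxpos : 0 < K₁ / ls := div_pos hK₁ hls
        have hlb0 : 0 ≤ Real.logb p (K₁/ls) := Real.logb_nonneg hp1 hx1
        have hge : (p:ℝ)^L ≤ K₁/ls := by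
          have h0 : (L:ℝ) ≤ Real.logb p (K₁/ls) := by
            rw [hLdef]; exact Nat.floor_le hlb0
          have h := Real.rpow_le_rpow_of_exponent_le hp1.le h0
          rwa [Real.rpow_logb hp0 hp1.ne' hxpos, Real.rpow_natCast] at h
        have hlt : K₁/ls < (p:ℝ)^(L+1) := by
          have h1 : Real.logb p (K₁/ls) < (L:ℝ) + 1 := by
            rw [hLdef]; exact Nat.lt_floor_add_one _
          have h2 := Real.rpow_lt_rpow_of_exponent_lt hp1 h1
          rw [Real.rpow_logb hp0 hp1.ne' hxpos] at h2
          rwa [show ((L:ℝ)+1) = ((L+1 : ℕ):ℝ) by push_cast; ring, Real.rpow_natCast] at h2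
        have hLm : L < m := by
          by_contra hLm'; push_neg at hLm'
          have h1 : (p:ℝ)^m ≤ (p:ℝ)^L := pow_le_pow_right₀ hp1.le hLm'
          have h2 : (p:ℝ)^m ≤ K₁/ls := le_trans h1 hge
          rw [le_div_iff₀ hls] at h2
          have hpm0 : (0:ℝ) < (p:ℝ)^m := pow_pos hp0 m
          have h3 : ls ≤ K₁ * ((p:ℝ)^m)⁻¹ := by
            rw [show K₁ * ((p:ℝ)^m)⁻¹ = K₁ / (p:ℝ)^m by rw [div_eq_mul_inv],
              le_div_iff₀ hpm0]
            linarith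
          linarith
        have hsL : ls ≤ s L := by
          have hpL0 : (0:ℝ) < (p:ℝ)^L := pow_pos hp0 L
          have h1 : (p:ℝ)^L * ls ≤ K₁ := by
            rw [← le_div_iff₀ hls]; exact hge
          have h2 : ls ≤ K₁ * ((p:ℝ)^L)⁻¹ := by
            rw [show K₁ * ((p:ℝ)^L)⁻¹ = K₁ / (p:ℝ)^L by rw [div_eq_mul_inv],
              le_div_iff₀ hpL0]
            linarith
          exact le_trans h2 (hsl L).1
        have h2 := hthalf L hsL
        have h3 := hsingle L hLm.le
        have hqLn : (q:ℝ)^L < 2*(n:ℝ) := by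
          have hqL0 : (0:ℝ) < (q:ℝ)^L := pow_pos hq0 L
          linarith
        have h4 : (p:ℝ)^(L+1) = p * ((q:ℝ)^L)^κ := by
          rw [hpowκ L, pow_succ]; ring
        have h5 : ((q:ℝ)^L)^κ < (2*(n:ℝ))^κ :=
          Real.rpow_lt_rpow (pow_nonneg hq0.le L) hqLn hκ0
        have h6 : ((2:ℝ)*(n:ℝ))^κ = twoκ * (n:ℝ)^κ := by
          rw [Real.mul_rpow (by norm_num) hn0.le, htwoκ]
        have h7 : K₁/ls < p * (twoκ * (n:ℝ)^κ) := by
          calc K₁/ls < (p:ℝ)^(L+1) := hlt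
            _ = p * ((q:ℝ)^L)^κ := h4
            _ < p * (twoκ * (n:ℝ)^κ) := by
                rw [← h6]
                exact mul_lt_mul_of_pos_left (by rw [h6] at h5; rw [h6]; exact h5) hp0
        have h8 : K₁ / (p * twoκ) * (n:ℝ)^(-κ) ≤ ls := by
          rw [hnκneg]
          have he : K₁/(p*twoκ) * ((n:ℝ)^κ)⁻¹ = K₁ / (p*twoκ*(n:ℝ)^κ) := by
            field_simp
          rw [he, div_le_iff₀ (by positivity)]
          rw [div_lt_iff₀ hls] at h7
          linarith [h7]
        have h9 : C₁ ≤ K₁ / (p * twoκ) := by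
          rw [hC₁def]; exact le_trans (min_le_right _ _) (min_le_right _ _)
        have h10 : C₁ * (n:ℝ)^(-κ) ≤ K₁ / (p * twoκ) * (n:ℝ)^(-κ) :=
          mul_le_mul_of_nonneg_right h9 hnκnn
        linarith
    rcases le_total (lam/(n:ℝ)) ((n:ℝ)^(-κ)) with h | h
    · rw [max_eq_right h]; exact hnκ
    · rw [max_eq_left h]; exact hml
  · -- lower bound in regime (ii)
    rw [one_mul]; exact hlsn
  · -- upper bound in regime (ii)
    have hqm0 : (0:ℝ) < (q:ℝ)^m := pow_pos hq0 m
    have hNhalf : N ≤ (n:ℝ)/2 := by linarith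
    have h1 : (n:ℝ)/2 ≤ lam / ls := by linarith [heq']
    rw [le_div_iff₀ hls] at h1
    rw [show (2:ℝ)*(lam/n) = 2*lam/n by ring, le_div_iff₀ hn0]
    linarith
end

section
/- There exist constants 0 < C₁ ≤ C₂ depending only on q, p, K₁, K₂ such that for every integer m ≥ 0 and every u ∈ (0,1): C₁·q^{min(ℓ_u, m)} ≤ Σ_{ℓ=0}^{m} s_ℓ² q^{ℓ}/(s_ℓ + u)² ≤ C₂·q^{min(ℓ_u, m)}. -/
open Finset

private lemma geom_half_aux (n : ℕ) :
    ∑ i ∈ range n, (1/2 : ℝ) ^ (i + 1) = 1 - (1/2 : ℝ) ^ n := by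
  induction n with
  | zero => simp
  | succ n ih => rw [sum_range_succ, ih]; ring

private lemma geom_q_aux (q : ℕ) (hq : 2 ≤ q) (n : ℕ) :
    ∑ ℓ ∈ range (n + 1), (q : ℝ) ^ ℓ ≤ 2 * (q : ℝ) ^ n := by
  have hq2 : (2 : ℝ) ≤ (q : ℝ) := by exact_mod_cast hq
  induction n with
  | zero => norm_num
  | succ n ih =>
    rw [sum_range_succ]
    have hqn : (0 : ℝ) ≤ (q : ℝ) ^ n := by positivity
    have : (q : ℝ) ^ (n + 1) = (q : ℝ) ^ n * q := pow_succ _ _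
    nlinarith

/-- Two-sided estimate `D(u) = Σ_{ℓ=0}^m s_ℓ² q^ℓ/(s_ℓ+u)² ≍ q^{min(ℓ_u, m)}` for `u ∈ (0,1)`,
where `p^{-(ℓ_u+1)} ≤ u < p^{-ℓ_u}`, with constants depending only on `q, p, K₁, K₂`. -/
theorem D_two_sided_estimate
    (q : ℕ) (hq : 2 ≤ q) (p K₁ K₂ : ℝ) (hpq : (q : ℝ) < p)
    (hK₁ : 0 < K₁) (hK₁₂ : K₁ ≤ K₂) :
    ∃ C₁ C₂ : ℝ, 0 < C₁ ∧ C₁ ≤ C₂ ∧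
      ∀ s : ℕ → ℝ,
        (∀ ℓ : ℕ, K₁ * p ^ (-(ℓ : ℝ)) ≤ s ℓ ∧ s ℓ ≤ K₂ * p ^ (-(ℓ : ℝ))) →
        ∀ m : ℕ, ∀ u : ℝ, 0 < u → u < 1 →
        ∀ lu : ℕ, p ^ (-((lu : ℝ) + 1)) ≤ u → u < p ^ (-(lu : ℝ)) →
          C₁ * (q : ℝ) ^ (min lu m)
              ≤ ∑ ℓ ∈ range (m + 1), (s ℓ) ^ 2 * (q : ℝ) ^ ℓ / (s ℓ + u) ^ 2 ∧
          ∑ ℓ ∈ range (m + 1), (s ℓ) ^ 2 * (q : ℝ) ^ ℓ / (s ℓ + u) ^ 2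
              ≤ C₂ * (q : ℝ) ^ (min lu m) := by
  have hq2 : (2 : ℝ) ≤ (q : ℝ) := by exact_mod_cast hq
  have hq0 : (0 : ℝ) < (q : ℝ) := by linarith
  have hp1 : (1 : ℝ) < p := by linarith
  have hp0 : (0 : ℝ) < p := by linarith
  have hK₂ : (0 : ℝ) < K₂ := lt_of_lt_of_le hK₁ hK₁₂
  set C₁ : ℝ := (K₁ / (K₂ + 1)) ^ 2 with hC₁def
  set C₂ : ℝ := 2 + K₂ ^ 2 * p ^ 2 + C₁ with hC₂def
  have hC₁pos : 0 < C₁ := by positivity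
  have hK2p : (0 : ℝ) ≤ K₂ ^ 2 * p ^ 2 := by positivity
  refine ⟨C₁, C₂, hC₁pos, by rw [hC₂def]; linarith, ?_⟩
  intro s hs m u hu0 hu1 lu hul huu
  -- convert rpow bounds to npow bounds
  have hrpow : ∀ ℓ : ℕ, p ^ (-(ℓ : ℝ)) = ((p : ℝ) ^ ℓ)⁻¹ := by
    intro ℓ
    rw [Real.rpow_neg hp0.le, Real.rpow_natCast]
  have hs0 : ∀ ℓ : ℕ, 0 < s ℓ := by
    intro ℓ
    have := (hs ℓ).1
    rw [hrpow] at this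
    have : 0 < K₁ * ((p : ℝ) ^ ℓ)⁻¹ := by positivity
    linarith [(hs ℓ).1, (hrpow ℓ) ▸ (hs ℓ).1]
  have hslb : ∀ ℓ : ℕ, K₁ * ((p : ℝ) ^ ℓ)⁻¹ ≤ s ℓ := by
    intro ℓ; have := (hs ℓ).1; rwa [hrpow] at this
  have hsub : ∀ ℓ : ℕ, s ℓ ≤ K₂ * ((p : ℝ) ^ ℓ)⁻¹ := by
    intro ℓ; have := (hs ℓ).2; rwa [hrpow] at this
  have hul' : ((p : ℝ) ^ (lu + 1))⁻¹ ≤ u := by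
    have : p ^ (-((lu : ℝ) + 1)) = ((p : ℝ) ^ (lu + 1))⁻¹ := by
      rw [show -((lu : ℝ) + 1) = -(((lu + 1 : ℕ) : ℝ)) by push_cast; ring, hrpow]
    linarith [this ▸ hul]
  have huu' : u < ((p : ℝ) ^ lu)⁻¹ := by
    have := hrpow lu ▸ huu; linarith
  -- notation for terms
  set t : ℕ → ℝ := fun ℓ => (s ℓ) ^ 2 * (q : ℝ) ^ ℓ / (s ℓ + u) ^ 2 with htdef
  have ht_nonneg : ∀ ℓ, 0 ≤ t ℓ := by
    intro ℓ
    have := hs0 ℓ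
    positivity
  -- per-term upper bound: t ℓ ≤ q^ℓ
  have ht_le : ∀ ℓ, t ℓ ≤ (q : ℝ) ^ ℓ := by
    intro ℓ
    have h1 : 0 < s ℓ := hs0 ℓ
    have h2 : (s ℓ) ^ 2 ≤ (s ℓ + u) ^ 2 := by nlinarith
    have h3 : (0 : ℝ) < (s ℓ + u) ^ 2 := by positivity
    rw [htdef]
    rw [div_le_iff₀ h3]
    have hqn : (0 : ℝ) ≤ (q : ℝ) ^ ℓ := by positivity
    nlinarith
  -- per-term lower bound for ℓ ≤ lu
  have ht_low : ∀ ℓ, ℓ ≤ lu → C₁ * (q : ℝ) ^ ℓ ≤ t ℓ := by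
    intro ℓ hl
    have hppos : (0 : ℝ) < (p : ℝ) ^ ℓ := by positivity
    have hmono : ((p : ℝ) ^ lu)⁻¹ ≤ ((p : ℝ) ^ ℓ)⁻¹ := by
      apply inv_anti₀ (by positivity)
      exact pow_le_pow_right₀ hp1.le hl
    have husmall : u ≤ ((p : ℝ) ^ ℓ)⁻¹ := le_trans huu'.le hmono
    have hupper : s ℓ + u ≤ (K₂ + 1) * ((p : ℝ) ^ ℓ)⁻¹ := by
      have := hsub ℓ
      have : s ℓ + u ≤ K₂ * ((p : ℝ) ^ ℓ)⁻¹ + ((p : ℝ) ^ ℓ)⁻¹ := by linarith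
      linarith [this]
    have hlow : K₁ * ((p : ℝ) ^ ℓ)⁻¹ ≤ s ℓ := hslb ℓ
    have hsu0 : (0 : ℝ) < s ℓ + u := by linarith [hs0 ℓ]
    have hsq : (s ℓ + u) ^ 2 ≤ ((K₂ + 1) * ((p : ℝ) ^ ℓ)⁻¹) ^ 2 :=
      pow_le_pow_left₀ hsu0.le hupper 2
    have hsl : (K₁ * ((p : ℝ) ^ ℓ)⁻¹) ^ 2 ≤ (s ℓ) ^ 2 :=
      pow_le_pow_left₀ (by positivity) hlow 2
    have hq1 : (0 : ℝ) < (q : ℝ) ^ ℓ := by positivity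
    show C₁ * (q : ℝ) ^ ℓ ≤ s ℓ ^ 2 * (q : ℝ) ^ ℓ / (s ℓ + u) ^ 2
    rw [le_div_iff₀ (by positivity)]
    have key : C₁ * ((K₂ + 1) * ((p : ℝ) ^ ℓ)⁻¹) ^ 2 = (K₁ * ((p : ℝ) ^ ℓ)⁻¹) ^ 2 := by
      field_simp [hC₁def]
      rw [hC₁def, div_pow, div_mul_cancel₀ _ (pow_ne_zero _ (by linarith))]
    have step1 : C₁ * (s ℓ + u) ^ 2 ≤ (s ℓ) ^ 2 := by
      calc C₁ * (s ℓ + u) ^ 2 ≤ C₁ * ((K₂ + 1) * ((p : ℝ) ^ ℓ)⁻¹) ^ 2 :=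
            mul_le_mul_of_nonneg_left hsq hC₁pos.le
        _ = (K₁ * ((p : ℝ) ^ ℓ)⁻¹) ^ 2 := key
        _ ≤ (s ℓ) ^ 2 := hsl
    calc C₁ * (q : ℝ) ^ ℓ * (s ℓ + u) ^ 2 = (C₁ * (s ℓ + u) ^ 2) * (q : ℝ) ^ ℓ := by ring
      _ ≤ (s ℓ) ^ 2 * (q : ℝ) ^ ℓ := mul_le_mul_of_nonneg_right step1 hq1.le
  -- per-term tail bound for ℓ > lu
  have ht_tail : ∀ ℓ, lu < ℓ → t ℓ ≤ K₂ ^ 2 * p ^ 2 * (q : ℝ) ^ lu * (1/2 : ℝ) ^ (ℓ - lu) := by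
    intro ℓ hl
    have hppos : (0 : ℝ) < (p : ℝ) ^ ℓ := by positivity
    obtain ⟨j, hj⟩ : ∃ j, ℓ = lu + (j + 1) := ⟨ℓ - lu - 1, by omega⟩
    have hjsub : ℓ - lu = j + 1 := by omega
    have hu2 : ((p : ℝ) ^ (lu + 1))⁻¹ ≤ s ℓ + u := by
      linarith [hul', (hs0 ℓ).le]
    have h0su : (0 : ℝ) < s ℓ + u := lt_of_lt_of_le (by positivity) hu2
    have hsl : s ℓ ≤ K₂ * ((p : ℝ) ^ ℓ)⁻¹ := hsub ℓ
    have h1 : t ℓ ≤ (K₂ * ((p : ℝ) ^ ℓ)⁻¹) ^ 2 * (q : ℝ) ^ ℓ / (((p : ℝ) ^ (lu + 1))⁻¹) ^ 2 := by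
      show s ℓ ^ 2 * (q : ℝ) ^ ℓ / (s ℓ + u) ^ 2
          ≤ (K₂ * ((p : ℝ) ^ ℓ)⁻¹) ^ 2 * (q : ℝ) ^ ℓ / (((p : ℝ) ^ (lu + 1))⁻¹) ^ 2
      apply div_le_div₀ (by positivity) ?_ (by positivity) ?_
      · exact mul_le_mul_of_nonneg_right
          (pow_le_pow_left₀ (hs0 ℓ).le hsl 2) (by positivity)
      · exact pow_le_pow_left₀ (by positivity) hu2 2
    have h2 : (K₂ * ((p : ℝ) ^ ℓ)⁻¹) ^ 2 * (q : ℝ) ^ ℓ / (((p : ℝ) ^ (lu + 1))⁻¹) ^ 2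
        = K₂ ^ 2 * p ^ 2 * (q : ℝ) ^ lu * ((q : ℝ) ^ (j + 1) / ((p : ℝ) ^ 2) ^ (j + 1)) := by
      subst hj
      have hpow2 : ((p : ℝ) ^ 2) ^ (j + 1) = ((p : ℝ) ^ (j + 1)) ^ 2 := by
        rw [← pow_mul, ← pow_mul, Nat.mul_comm]
      rw [hpow2, pow_add p lu (j + 1), pow_add (q : ℝ) lu (j + 1), pow_succ p lu]
      have ha : (p : ℝ) ^ lu ≠ 0 := by positivity
      have hb : (p : ℝ) ^ (j + 1) ≠ 0 := by positivity
      field_simp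
    have h3 : (q : ℝ) ^ (j + 1) / ((p : ℝ) ^ 2) ^ (j + 1) ≤ (1/2 : ℝ) ^ (j + 1) := by
      rw [div_eq_mul_inv, ← inv_pow, ← mul_pow]
      apply pow_le_pow_left₀ (by positivity)
      rw [← div_eq_mul_inv, div_le_iff₀ (by positivity)]
      nlinarith
    calc t ℓ ≤ K₂ ^ 2 * p ^ 2 * (q : ℝ) ^ lu * ((q : ℝ) ^ (j + 1) / ((p : ℝ) ^ 2) ^ (j + 1)) := by
            rw [← h2]; exact h1
      _ ≤ K₂ ^ 2 * p ^ 2 * (q : ℝ) ^ lu * (1/2 : ℝ) ^ (j + 1) := by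
            apply mul_le_mul_of_nonneg_left h3 (by positivity)
      _ = K₂ ^ 2 * p ^ 2 * (q : ℝ) ^ lu * (1/2 : ℝ) ^ (ℓ - lu) := by rw [hjsub]
  constructor
  · -- lower bound
    have hkmem : min lu m ∈ range (m + 1) := by
      simp [Nat.lt_succ_iff, min_le_right]
    calc C₁ * (q : ℝ) ^ (min lu m) ≤ t (min lu m) := ht_low _ (min_le_left _ _)
      _ ≤ ∑ ℓ ∈ range (m + 1), t ℓ :=
          single_le_sum (fun i _ => ht_nonneg i) hkmem
  · -- upper bound
    have hCC : 2 + K₂ ^ 2 * p ^ 2 ≤ C₂ := by rw [hC₂def]; linarith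
    have hqmin : (0 : ℝ) < (q : ℝ) ^ (min lu m) := by positivity
    rcases le_or_gt m lu with hml | hml
    · -- m ≤ lu : all terms bounded by q^ℓ
      have hmin : min lu m = m := min_eq_right hml
      calc ∑ ℓ ∈ range (m + 1), t ℓ ≤ ∑ ℓ ∈ range (m + 1), (q : ℝ) ^ ℓ :=
            sum_le_sum (fun i _ => ht_le i)
        _ ≤ 2 * (q : ℝ) ^ m := geom_q_aux q hq m
        _ ≤ C₂ * (q : ℝ) ^ (min lu m) := by
            rw [hmin]
            have h2C : (2 : ℝ) ≤ C₂ := by linarith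
            exact mul_le_mul_of_nonneg_right h2C (by positivity)
    · -- lu < m
      have hmin : min lu m = lu := min_eq_left hml.le
      have hsplit : ∑ ℓ ∈ range (m + 1), t ℓ
          = ∑ ℓ ∈ range (lu + 1), t ℓ + ∑ ℓ ∈ Ico (lu + 1) (m + 1), t ℓ := by
        rw [range_eq_Ico, range_eq_Ico]
        exact (sum_Ico_consecutive t (m := 0) (n := lu + 1) (k := m + 1) (by omega) (by omega)).symm
      have h1 : ∑ ℓ ∈ range (lu + 1), t ℓ ≤ 2 * (q : ℝ) ^ lu :=
        le_trans (sum_le_sum (fun i _ => ht_le i)) (geom_q_aux q hq lu)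
      have h2 : ∑ ℓ ∈ Ico (lu + 1) (m + 1), t ℓ ≤ K₂ ^ 2 * p ^ 2 * (q : ℝ) ^ lu := by
        calc ∑ ℓ ∈ Ico (lu + 1) (m + 1), t ℓ
            ≤ ∑ ℓ ∈ Ico (lu + 1) (m + 1),
                K₂ ^ 2 * p ^ 2 * (q : ℝ) ^ lu * (1/2 : ℝ) ^ (ℓ - lu) := by
              apply sum_le_sum
              intro i hi
              exact ht_tail i (by simpa using (mem_Ico.mp hi).1)
          _ = K₂ ^ 2 * p ^ 2 * (q : ℝ) ^ lu
                * ∑ ℓ ∈ Ico (lu + 1) (m + 1), (1/2 : ℝ) ^ (ℓ - lu) := by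
              rw [mul_sum]
          _ ≤ K₂ ^ 2 * p ^ 2 * (q : ℝ) ^ lu * 1 := by
              apply mul_le_mul_of_nonneg_left ?_ (by positivity)
              rw [sum_Ico_eq_sum_range]
              have heq : ∀ i ∈ range (m + 1 - (lu + 1)),
                  (1/2 : ℝ) ^ (lu + 1 + i - lu) = (1/2 : ℝ) ^ (i + 1) := by
                intro i _
                congr 1
                omega
              rw [sum_congr rfl heq, geom_half_aux]
              have : (0 : ℝ) ≤ (1/2 : ℝ) ^ (m + 1 - (lu + 1)) := by positivity
              linarith
          _ = K₂ ^ 2 * p ^ 2 * (q : ℝ) ^ lu := by ring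
      rw [hsplit, hmin]
      calc ∑ ℓ ∈ range (lu + 1), t ℓ + ∑ ℓ ∈ Ico (lu + 1) (m + 1), t ℓ
          ≤ 2 * (q : ℝ) ^ lu + K₂ ^ 2 * p ^ 2 * (q : ℝ) ^ lu := add_le_add h1 h2
        _ = (2 + K₂ ^ 2 * p ^ 2) * (q : ℝ) ^ lu := by ring
        _ ≤ C₂ * (q : ℝ) ^ lu := mul_le_mul_of_nonneg_right hCC (by positivity)
end

section
/- There exists a constant c₁ ∈ (0,1) depending only on q, p, K₁, K₂ such that for every integer m ≥ 0 and every u ∈ (0,1) with ℓ_u ≤ m: Σ_{ℓ=0}^{m} s_ℓ² q^{ℓ}/(s_ℓ + u)² ≤ (1 − c₁) · Σ_{ℓ=0}^{m} s_ℓ q^{ℓ}/(s_ℓ + u). -/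
open Finset

set_option maxHeartbeats 1600000 in
/-- For `u ∈ (0,1)` with `ℓ_u ≤ m` (where `p^{-(ℓ_u+1)} ≤ u < p^{-ℓ_u}`),
`D(u) = Σ_{ℓ=0}^m s_ℓ² q^ℓ/(s_ℓ+u)² ≤ (1 − c₁) F(u)` where
`F(u) = Σ_{ℓ=0}^m s_ℓ q^ℓ/(s_ℓ+u)`, with `c₁ ∈ (0,1)` depending only on `q, p, K₁, K₂`. -/
theorem D_le_F_strict_fraction
    (q : ℕ) (hq : 2 ≤ q) (p K₁ K₂ : ℝ) (hpq : (q : ℝ) < p)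
    (hK₁ : 0 < K₁) (hK₁₂ : K₁ ≤ K₂) :
    ∃ c₁ : ℝ, 0 < c₁ ∧ c₁ < 1 ∧
      ∀ s : ℕ → ℝ,
        (∀ ℓ : ℕ, K₁ * p ^ (-(ℓ : ℝ)) ≤ s ℓ ∧ s ℓ ≤ K₂ * p ^ (-(ℓ : ℝ))) →
        ∀ m : ℕ, ∀ u : ℝ, 0 < u → u < 1 →
        ∀ lu : ℕ, p ^ (-((lu : ℝ) + 1)) ≤ u → u < p ^ (-(lu : ℝ)) → lu ≤ m →
          ∑ ℓ ∈ range (m + 1), (s ℓ) ^ 2 * (q : ℝ) ^ ℓ / (s ℓ + u) ^ 2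
            ≤ (1 - c₁) * ∑ ℓ ∈ range (m + 1), s ℓ * (q : ℝ) ^ ℓ / (s ℓ + u) := by
  have hq2 : (2:ℝ) ≤ (q:ℝ) := by exact_mod_cast hq
  have hp2 : (2:ℝ) < p := lt_of_le_of_lt hq2 hpq
  have hp0 : (0:ℝ) < p := by linarith
  have hK₂ : 0 < K₂ := lt_of_lt_of_le hK₁ hK₁₂
  have hpqpos : (0:ℝ) < p - q := by linarith
  have hq0 : (0:ℝ) < (q:ℝ) := by linarith
  set δ : ℝ := 1 / (p * (K₂ + 1)) with hδdef
  set r : ℝ := K₁ / (K₁ + 1) with hrdef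
  set A : ℝ := 2 + K₂ * q * p / (p - q) with hAdef
  have hA2 : (2:ℝ) ≤ A := by
    have : 0 ≤ K₂ * q * p / (p - q) := by positivity
    simp only [hAdef]; linarith
  have hA0 : 0 < A := by linarith
  have hδ0 : 0 < δ := by positivity
  have hδ1 : δ < 1 := by
    rw [hδdef, div_lt_one (by positivity)]
    nlinarith
  have hr0 : 0 < r := by positivity
  have hr1 : r < 1 := by
    rw [hrdef, div_lt_one (by positivity)]; linarith
  refine ⟨δ * r / A, by positivity, ?_, ?_⟩
  · have h1 : δ * r < 1 := by nlinarith
    have h2 : δ * r / A ≤ δ * r / 2 := by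
      apply div_le_div_of_nonneg_left (by positivity) (by norm_num) hA2
    nlinarith
  intro s hs m u hu0 hu1 lu hul huu hlum
  -- convert rpow bounds to npow
  have hrp : ∀ ℓ : ℕ, p ^ (-(ℓ : ℝ)) = ((p:ℝ) ^ ℓ)⁻¹ := by
    intro ℓ
    rw [Real.rpow_neg hp0.le, Real.rpow_natCast]
  have hs1 : ∀ ℓ : ℕ, K₁ * ((p:ℝ) ^ ℓ)⁻¹ ≤ s ℓ := by
    intro ℓ; have := (hs ℓ).1; rwa [hrp ℓ] at this
  have hs2 : ∀ ℓ : ℕ, s ℓ ≤ K₂ * ((p:ℝ) ^ ℓ)⁻¹ := by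
    intro ℓ; have := (hs ℓ).2; rwa [hrp ℓ] at this
  have hsp : ∀ ℓ : ℕ, 0 < s ℓ := by
    intro ℓ; exact lt_of_lt_of_le (by positivity) (hs1 ℓ)
  have hul' : ((p:ℝ) ^ (lu + 1))⁻¹ ≤ u := by
    have : p ^ (-((lu : ℝ) + 1)) = ((p:ℝ) ^ (lu + 1))⁻¹ := by
      rw [show -((lu : ℝ) + 1) = -(((lu + 1 : ℕ)) : ℝ) by push_cast; ring, hrp]
    rwa [this] at hul
  have huu' : u < ((p:ℝ) ^ lu)⁻¹ := by rwa [hrp lu] at huu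
  set f : ℕ → ℝ := fun ℓ => s ℓ * (q : ℝ) ^ ℓ / (s ℓ + u) with hfdef
  clear_value f
  have hf0 : ∀ ℓ, 0 ≤ f ℓ := by
    intro ℓ; simp only [hfdef]; have := hsp ℓ; positivity
  -- termwise D ≤ F
  have key : ∀ ℓ : ℕ, (s ℓ) ^ 2 * (q : ℝ) ^ ℓ / (s ℓ + u) ^ 2 ≤ f ℓ := by
    intro ℓ
    have h1 := hsp ℓ
    have hx : (0:ℝ) ≤ (q:ℝ) ^ ℓ := by positivity
    simp only [hfdef]
    rw [div_le_div_iff₀ (by positivity) (by positivity)]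
    nlinarith [mul_nonneg (mul_nonneg (mul_nonneg h1.le hx) (by linarith : (0:ℝ) ≤ s ℓ + u)) hu0.le]
  -- improved bound at lu
  have hδu : δ * (s lu + u) ≤ u := by
    have h1 : s lu + u ≤ (K₂ + 1) * ((p:ℝ) ^ lu)⁻¹ := by
      have := hs2 lu
      nlinarith [huu'.le]
    have h2 : δ * ((K₂ + 1) * ((p:ℝ) ^ lu)⁻¹) = ((p:ℝ) ^ (lu + 1))⁻¹ := by
      rw [hδdef, pow_succ]
      field_simp
    calc δ * (s lu + u) ≤ δ * ((K₂ + 1) * ((p:ℝ) ^ lu)⁻¹) := by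
          apply mul_le_mul_of_nonneg_left h1 hδ0.le
      _ = ((p:ℝ) ^ (lu + 1))⁻¹ := h2
      _ ≤ u := hul'
  have keylu : (s lu) ^ 2 * (q : ℝ) ^ lu / (s lu + u) ^ 2 ≤ (1 - δ) * f lu := by
    have h1 := hsp lu
    have hx : (0:ℝ) ≤ (q:ℝ) ^ lu := by positivity
    have h3 : s lu ≤ (1 - δ) * (s lu + u) := by nlinarith
    simp only [hfdef]
    rw [show (1 - δ) * (s lu * (q:ℝ) ^ lu / (s lu + u))
        = ((1 - δ) * (s lu * (q:ℝ) ^ lu)) / (s lu + u) from (mul_div_assoc _ _ _).symm,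
      div_le_div_iff₀ (by positivity) (by positivity)]
    have hsu : (0:ℝ) ≤ s lu + u := by linarith
    have h4 := mul_le_mul_of_nonneg_left h3 (mul_nonneg (mul_nonneg h1.le hx) hsu)
    have e1 : s lu ^ 2 * (q:ℝ) ^ lu * (s lu + u)
        = s lu * (q:ℝ) ^ lu * (s lu + u) * s lu := by ring
    have e2 : (1 - δ) * (s lu * (q:ℝ) ^ lu) * (s lu + u) ^ 2
        = s lu * (q:ℝ) ^ lu * (s lu + u) * ((1 - δ) * (s lu + u)) := by ring
    linarith [h4, e1.le, e1.ge, e2.le, e2.ge]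
  have hmemlu : lu ∈ range (m + 1) := mem_range.mpr (Nat.lt_succ_of_le hlum)
  -- Step A : D ≤ F - δ * f lu
  have stepA : ∑ ℓ ∈ range (m + 1), (s ℓ) ^ 2 * (q : ℝ) ^ ℓ / (s ℓ + u) ^ 2
      ≤ (∑ ℓ ∈ range (m + 1), f ℓ) - δ * f lu := by
    have h1 : ∀ ℓ ∈ range (m + 1),
        (s ℓ) ^ 2 * (q : ℝ) ^ ℓ / (s ℓ + u) ^ 2
          ≤ f ℓ - (if ℓ = lu then δ * f ℓ else 0) := by
      intro ℓ _
      by_cases h : ℓ = lu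
      · subst h; rw [if_pos rfl]; linarith [keylu]
      · simp only [if_neg h, sub_zero]; exact key ℓ
    calc ∑ ℓ ∈ range (m + 1), (s ℓ) ^ 2 * (q : ℝ) ^ ℓ / (s ℓ + u) ^ 2
        ≤ ∑ ℓ ∈ range (m + 1), (f ℓ - (if ℓ = lu then δ * f ℓ else 0)) :=
          Finset.sum_le_sum h1
      _ = (∑ ℓ ∈ range (m + 1), f ℓ) - δ * f lu := by
          rw [Finset.sum_sub_distrib]
          congr 1
          rw [Finset.sum_ite_eq' (range (m + 1)) lu (fun ℓ => δ * f ℓ), if_pos hmemlu]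
  -- lower bound on f lu
  have hFlu : r * (q:ℝ) ^ lu ≤ f lu := by
    have h1 := hsp lu
    have hx : (0:ℝ) ≤ (q:ℝ) ^ lu := by positivity
    have hK1u : K₁ * u ≤ s lu := by
      have := hs1 lu
      nlinarith [huu'.le]
    have hr2 : r * (s lu + u) ≤ s lu := by
      rw [hrdef, div_mul_eq_mul_div, div_le_iff₀ (by positivity)]
      nlinarith
    simp only [hfdef]
    rw [le_div_iff₀ (by positivity)]
    nlinarith [mul_le_mul_of_nonneg_right hr2 hx]
  -- upper bound on F
  have hFub : ∑ ℓ ∈ range (m + 1), f ℓ ≤ A * (q:ℝ) ^ lu := by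
    have hsplit : m + 1 = (lu + 1) + (m - lu) := by omega
    rw [hsplit, Finset.sum_range_add]
    have part1 : ∑ ℓ ∈ range (lu + 1), f ℓ ≤ 2 * (q:ℝ) ^ lu := by
      have h1 : ∀ ℓ ∈ range (lu + 1), f ℓ ≤ (q:ℝ) ^ ℓ := by
        intro ℓ _
        have h1 := hsp ℓ
        have hx : (0:ℝ) ≤ (q:ℝ) ^ ℓ := by positivity
        simp only [hfdef]
        rw [div_le_iff₀ (by positivity)]
        nlinarith
      calc ∑ ℓ ∈ range (lu + 1), f ℓ ≤ ∑ ℓ ∈ range (lu + 1), (q:ℝ) ^ ℓ :=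
            Finset.sum_le_sum h1
        _ = ((q:ℝ) ^ (lu + 1) - 1) / ((q:ℝ) - 1) := geom_sum_eq (by linarith) _
        _ ≤ 2 * (q:ℝ) ^ lu := by
            rw [div_le_iff₀ (by linarith)]
            have h2 : (1:ℝ) ≤ (q:ℝ) ^ lu := one_le_pow₀ (by linarith)
            nlinarith [pow_succ (q:ℝ) lu]
    have part2 : ∑ i ∈ range (m - lu), f (lu + 1 + i)
        ≤ K₂ * q * p / (p - q) * (q:ℝ) ^ lu := by
      have hbound : ∀ i ∈ range (m - lu),
          f (lu + 1 + i) ≤ K₂ * (q:ℝ) ^ (lu + 1) * ((q:ℝ) / p) ^ i := by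
        intro i _
        set ℓ := lu + 1 + i with hℓ
        have h1 := hsp ℓ
        have hx : (0:ℝ) ≤ (q:ℝ) ^ ℓ := by positivity
        have hpu : (1:ℝ) ≤ p ^ (lu + 1) * u := by
          have h := mul_le_mul_of_nonneg_left hul'
            (by positivity : (0:ℝ) ≤ p ^ (lu + 1))
          rwa [mul_inv_cancel₀ (by positivity : (0:ℝ) < p ^ (lu + 1)).ne'] at h
        have hsl : s ℓ ≤ K₂ * ((p:ℝ) ^ ℓ)⁻¹ := hs2 ℓ
        have step1 : f ℓ ≤ s ℓ * (q:ℝ) ^ ℓ / u := by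
          simp only [hfdef]
          apply div_le_div_of_nonneg_left (by positivity) hu0 (by linarith)
        have step2 : s ℓ * (q:ℝ) ^ ℓ / u ≤ K₂ * ((p:ℝ) ^ ℓ)⁻¹ * (q:ℝ) ^ ℓ * p ^ (lu + 1) := by
          rw [div_le_iff₀ hu0]
          have hKpos : 0 ≤ K₂ * ((p:ℝ) ^ ℓ)⁻¹ * (q:ℝ) ^ ℓ := by positivity
          calc s ℓ * (q:ℝ) ^ ℓ ≤ K₂ * ((p:ℝ) ^ ℓ)⁻¹ * (q:ℝ) ^ ℓ := by
                apply mul_le_mul_of_nonneg_right hsl hx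
            _ = K₂ * ((p:ℝ) ^ ℓ)⁻¹ * (q:ℝ) ^ ℓ * 1 := by ring
            _ ≤ K₂ * ((p:ℝ) ^ ℓ)⁻¹ * (q:ℝ) ^ ℓ * (p ^ (lu + 1) * u) := by
                apply mul_le_mul_of_nonneg_left hpu hKpos
            _ = K₂ * ((p:ℝ) ^ ℓ)⁻¹ * (q:ℝ) ^ ℓ * p ^ (lu + 1) * u := by ring
        have heq : K₂ * ((p:ℝ) ^ ℓ)⁻¹ * (q:ℝ) ^ ℓ * p ^ (lu + 1)
            = K₂ * (q:ℝ) ^ (lu + 1) * ((q:ℝ) / p) ^ i := by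
          rw [hℓ, pow_add, pow_add, div_pow]
          field_simp
          ring
        linarith [step1, step2, heq.le]
      have hqp1 : (q:ℝ) / p < 1 := by rw [div_lt_one hp0]; exact hpq
      have hqp0 : (0:ℝ) ≤ (q:ℝ) / p := by positivity
      have hgeo : ∑ i ∈ range (m - lu), ((q:ℝ) / p) ^ i ≤ p / (p - q) := by
        have hne : (q:ℝ) / p ≠ 1 := ne_of_lt hqp1
        rw [geom_sum_eq hne]
        have hxn : (0:ℝ) ≤ ((q:ℝ)/p) ^ (m - lu) := by positivity
        rw [show (((q:ℝ)/p) ^ (m - lu) - 1) / ((q:ℝ)/p - 1)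
            = (1 - ((q:ℝ)/p) ^ (m - lu)) / (1 - (q:ℝ)/p) by
          rw [← neg_div_neg_eq]; ring_nf]
        have hd : (0:ℝ) < 1 - (q:ℝ)/p := by linarith
        have h1 : (1 - ((q:ℝ)/p) ^ (m - lu)) / (1 - (q:ℝ)/p) ≤ 1 / (1 - (q:ℝ)/p) := by
          rw [div_le_div_iff₀ hd hd]
          nlinarith
        have h2 : 1 / (1 - (q:ℝ)/p) = p / (p - q) := by
          field_simp
        linarith
      calc ∑ i ∈ range (m - lu), f (lu + 1 + i)
          ≤ ∑ i ∈ range (m - lu), K₂ * (q:ℝ) ^ (lu + 1) * ((q:ℝ) / p) ^ i :=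
            Finset.sum_le_sum hbound
        _ = K₂ * (q:ℝ) ^ (lu + 1) * ∑ i ∈ range (m - lu), ((q:ℝ) / p) ^ i := by
            rw [Finset.mul_sum]
        _ ≤ K₂ * (q:ℝ) ^ (lu + 1) * (p / (p - q)) := by
            apply mul_le_mul_of_nonneg_left hgeo (by positivity)
        _ = K₂ * q * p / (p - q) * (q:ℝ) ^ lu := by
            rw [pow_succ]; field_simp
    rw [hAdef]
    have : (2 + K₂ * q * p / (p - q)) * (q:ℝ) ^ lu
        = 2 * (q:ℝ) ^ lu + K₂ * q * p / (p - q) * (q:ℝ) ^ lu := by ring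
    rw [this]
    exact add_le_add part1 part2
  -- conclude
  have hc1A : (δ * r / A) * A = δ * r := by field_simp
  have hfinal : (δ * r / A) * (∑ ℓ ∈ range (m + 1), f ℓ) ≤ δ * f lu := by
    have hc10 : 0 ≤ δ * r / A := by positivity
    calc (δ * r / A) * (∑ ℓ ∈ range (m + 1), f ℓ)
        ≤ (δ * r / A) * (A * (q:ℝ) ^ lu) := by
          apply mul_le_mul_of_nonneg_left hFub hc10
      _ = δ * (r * (q:ℝ) ^ lu) := by
          rw [show (δ * r / A) * (A * (q:ℝ) ^ lu) = ((δ * r / A) * A) * (q:ℝ) ^ lu by ring,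
            hc1A]; ring
      _ ≤ δ * f lu := by apply mul_le_mul_of_nonneg_left hFlu hδ0.le
  have hexp : (1 - δ * r / A) * ∑ ℓ ∈ range (m + 1), f ℓ
      = (∑ ℓ ∈ range (m + 1), f ℓ) - (δ * r / A) * (∑ ℓ ∈ range (m + 1), f ℓ) := by
    ring
  linarith [stepA, hfinal, hexp.le, hexp.ge]
end

section
/- Assume r·p < 1. There exist constants 0 < C₁ ≤ C₂ depending only on p, r, K₁, K₂, K̃₁, K̃₂ such that for every integer m ≥ 0 and every u ∈ (0,1): C₁ ≤ Σ_{ℓ=0}^{m} s_ℓ‖θ^{(ℓ)}‖²/(s_ℓ + u)² ≤ C₂. -/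
open Finset

/-- If `r·p < 1` then `Σ_{ℓ=0}^m s_ℓ‖θ^{(ℓ)}‖²/(s_ℓ+u)²` is bounded above and below by
positive constants depending only on `p, r, K₁, K₂, K̃₁, K̃₂`, uniformly over `m ≥ 0`
and `u ∈ (0,1)`. -/
theorem weighted_theta_sum_order
    (q : ℕ) (hq : 2 ≤ q) (p r K₁ K₂ Kt₁ Kt₂ : ℝ) (hpq : (q : ℝ) < p)
    (hr0 : 0 < r) (hr1 : r < 1)
    (hK₁ : 0 < K₁) (hK₁₂ : K₁ ≤ K₂) (hKt₁ : 0 < Kt₁) (hKt₁₂ : Kt₁ ≤ Kt₂)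
    (hrp : r * p < 1) :
    ∃ C₁ C₂ : ℝ, 0 < C₁ ∧ C₁ ≤ C₂ ∧
      ∀ s : ℕ → ℝ,
        (∀ ℓ : ℕ, K₁ * p ^ (-(ℓ : ℝ)) ≤ s ℓ ∧ s ℓ ≤ K₂ * p ^ (-(ℓ : ℝ))) →
        ∀ θ : (ℓ : ℕ) → Fin (q ^ ℓ) → ℝ,
        (∀ ℓ : ℕ, Kt₁ * r ^ ℓ ≤ ∑ j, (θ ℓ j) ^ 2 ∧ ∑ j, (θ ℓ j) ^ 2 ≤ Kt₂ * r ^ ℓ) →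
        ∀ m : ℕ, ∀ u : ℝ, 0 < u → u < 1 →
          C₁ ≤ ∑ ℓ ∈ range (m + 1), s ℓ * (∑ j, (θ ℓ j) ^ 2) / (s ℓ + u) ^ 2 ∧
          ∑ ℓ ∈ range (m + 1), s ℓ * (∑ j, (θ ℓ j) ^ 2) / (s ℓ + u) ^ 2 ≤ C₂ := by
  have hp0 : (0:ℝ) < p := lt_trans (by positivity) hpq
  have hK₂ : (0:ℝ) < K₂ := lt_of_lt_of_le hK₁ hK₁₂
  have hrp0 : (0:ℝ) < r * p := mul_pos hr0 hp0
  have h1rp : (0:ℝ) < 1 - r * p := by linarith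
  have hKt₂ : (0:ℝ) < Kt₂ := lt_of_lt_of_le hKt₁ hKt₁₂
  refine ⟨K₁ * Kt₁ / (K₂ + 1) ^ 2,
    max (K₁ * Kt₁ / (K₂ + 1) ^ 2) (Kt₂ / K₁ * (1 / (1 - r * p))), by positivity,
    le_max_left _ _, ?_⟩
  intro s hs θ hθ m u hu0 hu1
  have hsl : ∀ ℓ, 0 < s ℓ := fun ℓ =>
    lt_of_lt_of_le (mul_pos hK₁ (Real.rpow_pos_of_pos hp0 _)) (hs ℓ).1
  have hθl : ∀ ℓ, 0 < ∑ j, (θ ℓ j) ^ 2 := fun ℓ =>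
    lt_of_lt_of_le (by positivity) (hθ ℓ).1
  have hterm : ∀ ℓ, 0 ≤ s ℓ * (∑ j, (θ ℓ j) ^ 2) / (s ℓ + u) ^ 2 := fun ℓ => by
    have := hsl ℓ; have := hθl ℓ; positivity
  constructor
  · -- lower bound via the ℓ = 0 term
    have h0 : s 0 * (∑ j, (θ 0 j) ^ 2) / (s 0 + u) ^ 2 ≤
        ∑ ℓ ∈ range (m + 1), s ℓ * (∑ j, (θ ℓ j) ^ 2) / (s ℓ + u) ^ 2 :=
      Finset.single_le_sum (fun i _ => hterm i) (Finset.mem_range.mpr (Nat.succ_pos m))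
    refine le_trans ?_ h0
    have hs0 : K₁ ≤ s 0 := by have := (hs 0).1; simpa using this
    have hs0' : s 0 ≤ K₂ := by have := (hs 0).2; simpa using this
    have hθ0 : Kt₁ ≤ ∑ j, (θ 0 j) ^ 2 := by have := (hθ 0).1; simpa using this
    have hd : (s 0 + u) ^ 2 ≤ (K₂ + 1) ^ 2 := by
      apply pow_le_pow_left₀ (add_pos (hsl 0) hu0).le (by linarith)
    exact div_le_div₀ (mul_nonneg (hsl 0).le (hθl 0).le)
      (mul_le_mul hs0 hθ0 hKt₁.le (hsl 0).le) (pow_pos (add_pos (hsl 0) hu0) 2) hd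
  · -- upper bound
    refine le_trans ?_ (le_max_right _ _)
    have hstep : ∀ ℓ, s ℓ * (∑ j, (θ ℓ j) ^ 2) / (s ℓ + u) ^ 2 ≤
        Kt₂ / K₁ * (r * p) ^ ℓ := by
      intro ℓ
      have h1 : s ℓ * (∑ j, (θ ℓ j) ^ 2) / (s ℓ + u) ^ 2 ≤
          s ℓ * (∑ j, (θ ℓ j) ^ 2) / (s ℓ) ^ 2 := by
        apply div_le_div_of_nonneg_left (mul_nonneg (hsl ℓ).le (hθl ℓ).le)
          (pow_pos (hsl ℓ) 2)
        apply pow_le_pow_left₀ (hsl ℓ).le (by linarith)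
      have h2 : s ℓ * (∑ j, (θ ℓ j) ^ 2) / (s ℓ) ^ 2 = (∑ j, (θ ℓ j) ^ 2) / s ℓ := by
        have := (hsl ℓ).ne'
        field_simp
      have h3 : (∑ j, (θ ℓ j) ^ 2) / s ℓ ≤ (Kt₂ * r ^ ℓ) / (K₁ * p ^ (-(ℓ:ℝ))) :=
        div_le_div₀ (mul_pos hKt₂ (pow_pos hr0 ℓ)).le (hθ ℓ).2
          (mul_pos hK₁ (Real.rpow_pos_of_pos hp0 _)) (hs ℓ).1
      have h4 : (Kt₂ * r ^ ℓ) / (K₁ * p ^ (-(ℓ:ℝ))) = Kt₂ / K₁ * (r * p) ^ ℓ := by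
        rw [Real.rpow_neg hp0.le, Real.rpow_natCast, mul_pow]
        field_simp
      rw [h4] at h3
      rw [h2] at h1
      exact le_trans h1 h3
    calc ∑ ℓ ∈ range (m + 1), s ℓ * (∑ j, (θ ℓ j) ^ 2) / (s ℓ + u) ^ 2
        ≤ ∑ ℓ ∈ range (m + 1), Kt₂ / K₁ * (r * p) ^ ℓ :=
          Finset.sum_le_sum fun i _ => hstep i
      _ = Kt₂ / K₁ * ∑ ℓ ∈ range (m + 1), (r * p) ^ ℓ := by rw [Finset.mul_sum]
      _ ≤ Kt₂ / K₁ * (1 / (1 - r * p)) := by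
          apply mul_le_mul_of_nonneg_left _ (div_pos hKt₂ hK₁).le
          rw [geom_sum_eq (by intro h; rw [h] at hrp; linarith : r * p ≠ 1)]
          rw [show (r*p)^(m+1) - 1 = -(1 - (r*p)^(m+1)) by ring,
            show r*p - 1 = -(1 - r*p) by ring, neg_div_neg_eq,
            div_le_div_iff₀ h1rp h1rp]
          have hpow : (0:ℝ) ≤ (r * p) ^ (m + 1) := by positivity
          nlinarith
end

section
/- Define b_ℓ := (q^ℓ − 1)/(q − 1) for ℓ ≥ 0, and define the sequence (σ_i)_{i≥1} by σ_i := s_ℓ whenever b_ℓ < i ≤ b_{ℓ+1} (so block ℓ contributes q^ℓ consecutive entries equal to s_ℓ). Then Σ_{i≥1} σ_i < ∞, and there exist constants C, C' > 0 depending only on q, p, K₁, K₂ such that: (i) for every ℓ ≥ 0 and every integer k with b_ℓ < k ≤ b_{ℓ+1}, Σ_{i≥k} σ_i ≤ C·q^{ℓ}·σ_k; (ii) for every integer k ≥ 1, Σ_{i≥k} σ_i ≤ C'·k·σ_k. -/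
open Finset

/-- Effective-dimension estimate for the covariance eigenvalue sequence `(σ_i)_{i≥1}` of the
block-structured model: with `b_ℓ = (q^ℓ − 1)/(q − 1) = Σ_{j<ℓ} q^j` and `σ_i = s_ℓ` for
`b_ℓ < i ≤ b_{ℓ+1}`, the sequence is summable, `Σ_{i≥k} σ_i ≤ C q^ℓ σ_k` for `b_ℓ < k ≤ b_{ℓ+1}`,
and `Σ_{i≥k} σ_i ≤ C' k σ_k` for every `k ≥ 1`. -/
theorem covariance_effective_dimension
    (q : ℕ) (hq : 2 ≤ q) (p K₁ K₂ : ℝ) (hpq : (q : ℝ) < p)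
    (hK₁ : 0 < K₁) (hK₁₂ : K₁ ≤ K₂) :
    ∃ C C' : ℝ, 0 < C ∧ 0 < C' ∧
      ∀ s : ℕ → ℝ,
        (∀ ℓ : ℕ, K₁ * p ^ (-(ℓ : ℝ)) ≤ s ℓ ∧ s ℓ ≤ K₂ * p ^ (-(ℓ : ℝ))) →
        ∀ σ : ℕ → ℝ,
        (∀ ℓ i : ℕ, (∑ j ∈ range ℓ, q ^ j) < i → i ≤ ∑ j ∈ range (ℓ + 1), q ^ j →
            σ i = s ℓ) →
        (Summable fun i : ℕ => σ (i + 1)) ∧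
        (∀ ℓ k : ℕ, (∑ j ∈ range ℓ, q ^ j) < k → k ≤ ∑ j ∈ range (ℓ + 1), q ^ j →
            ∑' i : ℕ, σ (k + i) ≤ C * (q : ℝ) ^ ℓ * σ k) ∧
        (∀ k : ℕ, 1 ≤ k → ∑' i : ℕ, σ (k + i) ≤ C' * k * σ k) := by
  classical
  have hq1 : (1:ℝ) < q := by exact_mod_cast hq.trans_lt' one_lt_two
  have hq0 : (0:ℝ) < q := lt_trans one_pos hq1
  have hp : (0:ℝ) < p := lt_trans hq0 hpq
  set r : ℝ := (q:ℝ) / p with hr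
  have hr0 : 0 ≤ r := by positivity
  have hr1 : r < 1 := (div_lt_one hp).2 hpq
  set C0 : ℝ := K₂ * p / (p - q) with hC0def
  have hK₂ : 0 < K₂ := lt_of_lt_of_le hK₁ hK₁₂
  have hpq' : 0 < p - q := sub_pos.2 hpq
  have hC0 : 0 < C0 := by positivity
  refine ⟨C0 / K₁, C0 / K₁ * ((q:ℝ) - 1), by positivity, mul_pos (by positivity) (sub_pos.2 hq1), ?_⟩
  intro s hs σ hσ
  have hrw : ∀ m : ℕ, p ^ (-(m : ℝ)) = ((p:ℝ) ^ m)⁻¹ := fun m => by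
    rw [Real.rpow_neg hp.le, Real.rpow_natCast]
  have hspos : ∀ m, 0 < s m := fun m =>
    lt_of_lt_of_le (mul_pos hK₁ (Real.rpow_pos_of_pos hp _)) (hs m).1
  set b : ℕ → ℕ := fun L => ∑ j ∈ range L, q ^ j with hbdef
  have hbL : ∀ L, L ≤ b L := by
    intro L
    calc L = ∑ _j ∈ range L, 1 := by simp
    _ ≤ b L := Finset.sum_le_sum fun j _ => Nat.one_le_pow _ _ (by omega)
  have hbmono : Monotone b := fun a L h =>
    Finset.sum_le_sum_of_subset (range_subset_range.2 h)
  have hbsucc : ∀ L, b (L+1) = b L + q ^ L := fun L => sum_range_succ _ L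
  -- block membership
  have hmem : ∀ k, 1 ≤ k → ∃ ℓ, b ℓ < k ∧ k ≤ b (ℓ + 1) := by
    intro k hk
    have hex : ∃ L, k ≤ b L := ⟨k, hbL k⟩
    have hLk : k ≤ b (Nat.find hex) := Nat.find_spec hex
    have hL1 : Nat.find hex ≠ 0 := by
      intro h
      rw [h] at hLk
      simp [hbdef] at hLk
      omega
    obtain ⟨ℓ, hℓ⟩ := Nat.exists_eq_succ_of_ne_zero hL1
    rw [hℓ] at hLk
    have hmin := Nat.find_min hex (by omega : ℓ < Nat.find hex)
    exact ⟨ℓ, by omega, hLk⟩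
  have hσ0 : ∀ i, 1 ≤ i → 0 < σ i := by
    intro i hi
    obtain ⟨ℓ, h1, h2⟩ := hmem i hi
    rw [hσ ℓ i h1 h2]
    exact hspos ℓ
  -- one block sum
  have hone : ∀ L, ∑ i ∈ Ioc (b L) (b (L+1)), σ i = (q:ℝ)^L * s L := by
    intro L
    have hc : ∀ i ∈ Ioc (b L) (b (L+1)), σ i = s L := fun i hi =>
      hσ L i (mem_Ioc.1 hi).1 (mem_Ioc.1 hi).2
    rw [Finset.sum_congr rfl hc, Finset.sum_const, Nat.card_Ioc, hbsucc,
      Nat.add_sub_cancel_left, nsmul_eq_mul]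
    push_cast
    ring
  -- block range sums
  have hblocks : ∀ a L, a ≤ L →
      ∑ i ∈ Ioc (b a) (b L), σ i = ∑ m ∈ Ico a L, (q:ℝ)^m * s m := by
    intro a L h
    induction L, h using Nat.le_induction with
    | base => simp
    | succ L hL ih =>
      rw [← Finset.sum_Ioc_consecutive _ (hbmono hL) (hbmono (Nat.le_succ L)), ih,
        hone, Finset.sum_Ico_succ_top hL]
  -- partial tail sums bound
  have hpart : ∀ ℓ k, b ℓ < k → ∀ n, ∑ i ∈ range n, σ (k + i) ≤ C0 * r ^ ℓ := by
    intro ℓ k hk n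
    have h1 : ∑ j ∈ Ico k (k + n), σ j = ∑ i ∈ range n, σ (k + i) := by
      rw [Finset.sum_Ico_eq_sum_range]
      simp
    have hkn : k + n ≤ b (k + n) := hbL (k + n)
    have hsub : Ico k (k + n) ⊆ Ioc (b ℓ) (b (k + n)) := by
      intro j hj
      rw [mem_Ico] at hj
      rw [mem_Ioc]
      omega
    have h2 : ∑ j ∈ Ico k (k+n), σ j ≤ ∑ j ∈ Ioc (b ℓ) (b (k+n)), σ j :=
      Finset.sum_le_sum_of_subset_of_nonneg hsub
        (fun j hj _ => (hσ0 j (by rw [mem_Ioc] at hj; omega)).le)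
    have hℓkn : ℓ ≤ k + n := le_trans (le_trans (hbL ℓ) hk.le) (Nat.le_add_right k n)
    rw [← h1]
    refine h2.trans ?_
    rw [hblocks ℓ (k+n) hℓkn]
    have hterm : ∀ m ∈ Ico ℓ (k+n), (q:ℝ)^m * s m ≤ K₂ * r ^ m := by
      intro m _
      have h := (hs m).2
      rw [hrw] at h
      calc (q:ℝ)^m * s m ≤ (q:ℝ)^m * (K₂ * ((p:ℝ)^m)⁻¹) :=
            mul_le_mul_of_nonneg_left h (by positivity)
        _ = K₂ * r ^ m := by rw [hr, div_pow]; ring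
    have hgeo : ∑ m ∈ Ico ℓ (k+n), r ^ m ≤ r ^ ℓ * (1 - r)⁻¹ := by
      have he : ∑ m ∈ Ico ℓ (k+n), r ^ m = r ^ ℓ * ∑ j ∈ range (k+n-ℓ), r ^ j := by
        rw [Finset.sum_Ico_eq_sum_range, Finset.mul_sum]
        exact Finset.sum_congr rfl fun j _ => pow_add r ℓ j
      rw [he]
      have hX : ∑ j ∈ range (k+n-ℓ), r ^ j ≤ (1-r)⁻¹ := by
        have hle := Summable.sum_le_tsum (range (k+n-ℓ)) (fun j _ => pow_nonneg hr0 j)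
          (summable_geometric_of_lt_one hr0 hr1)
        rwa [tsum_geometric_of_lt_one hr0 hr1] at hle
      exact mul_le_mul_of_nonneg_left hX (pow_nonneg hr0 ℓ)
    calc ∑ m ∈ Ico ℓ (k+n), (q:ℝ)^m * s m
        ≤ ∑ m ∈ Ico ℓ (k+n), K₂ * r ^ m := Finset.sum_le_sum hterm
      _ = K₂ * ∑ m ∈ Ico ℓ (k+n), r ^ m := by rw [Finset.mul_sum]
      _ ≤ K₂ * (r ^ ℓ * (1 - r)⁻¹) := mul_le_mul_of_nonneg_left hgeo hK₂.le
      _ = C0 * r ^ ℓ := by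
          rw [hC0def, hr]
          have h1r : 1 - (q:ℝ)/p = (p - q)/p := by field_simp
          rw [h1r]
          field_simp
  -- summability
  have hsum : Summable fun i : ℕ => σ (i + 1) := by
    refine summable_of_sum_range_le (c := C0) (fun i => (hσ0 (i+1) (by omega)).le) (fun n => ?_)
    have h := hpart 0 1 (by simp [hbdef]) n
    simp only [pow_zero, mul_one] at h
    calc ∑ i ∈ range n, σ (i+1) = ∑ i ∈ range n, σ (1+i) :=
          Finset.sum_congr rfl fun i _ => by rw [add_comm]
      _ ≤ C0 := h
  refine ⟨hsum, ?_⟩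
  -- tail tsum bound helper
  have htsum : ∀ ℓ k, b ℓ < k → ∑' i : ℕ, σ (k + i) ≤ C0 * r ^ ℓ := by
    intro ℓ k hk
    exact Real.tsum_le_of_sum_range_le
      (fun i => (hσ0 (k+i) (by have := hbL ℓ; omega)).le) (hpart ℓ k hk)
  have hmain : ∀ ℓ k, b ℓ < k → k ≤ b (ℓ+1) →
      ∑' i : ℕ, σ (k + i) ≤ C0 / K₁ * (q:ℝ)^ℓ * σ k := by
    intro ℓ k hk1 hk2
    refine (htsum ℓ k hk1).trans ?_
    have hsk : K₁ * ((p:ℝ)^ℓ)⁻¹ ≤ σ k := by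
      rw [hσ ℓ k hk1 hk2]
      have := (hs ℓ).1
      rwa [hrw] at this
    have hCq : (0:ℝ) ≤ C0 / K₁ * (q:ℝ)^ℓ := by positivity
    calc C0 * r ^ ℓ = C0 / K₁ * (q:ℝ)^ℓ * (K₁ * ((p:ℝ)^ℓ)⁻¹) := by
          rw [hr, div_pow]
          field_simp
      _ ≤ C0 / K₁ * (q:ℝ)^ℓ * σ k := mul_le_mul_of_nonneg_left hsk hCq
  refine ⟨hmain, ?_⟩
  intro k hk
  obtain ⟨ℓ, h1, h2⟩ := hmem k hk
  refine (hmain ℓ k h1 h2).trans ?_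
  have hσk : 0 < σ k := hσ0 k hk
  have hcast : ((b ℓ : ℕ) : ℝ) = ((q:ℝ)^ℓ - 1)/((q:ℝ) - 1) := by
    rw [hbdef]
    push_cast
    exact geom_sum_eq hq1.ne' ℓ
  have hmul : ((q:ℝ) - 1) * (b ℓ : ℝ) = (q:ℝ)^ℓ - 1 := by
    rw [hcast]
    field_simp
    rw [mul_div_cancel_left₀ _ (by linarith : (q:ℝ) - 1 ≠ 0)]
  have hbk : (b ℓ : ℝ) + 1 ≤ (k : ℝ) := by exact_mod_cast h1
  have hq2 : (2:ℝ) ≤ q := by exact_mod_cast hq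
  have hqk : (q:ℝ)^ℓ ≤ ((q:ℝ) - 1) * k := by
    nlinarith [mul_le_mul_of_nonneg_left hbk (by linarith : (0:ℝ) ≤ (q:ℝ) - 1)]
  calc C0 / K₁ * (q:ℝ)^ℓ * σ k ≤ C0 / K₁ * (((q:ℝ) - 1) * k) * σ k := by
        have := mul_le_mul_of_nonneg_left hqk (by positivity : (0:ℝ) ≤ C0 / K₁)
        exact mul_le_mul_of_nonneg_right this hσk.le
    _ = C0 / K₁ * ((q:ℝ) - 1) * k * σ k := by ring
end
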